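/- arXiv:math/9910028 — 6 statements merged into one kernel-verified Lean document; each statement's English description precedes it below -/
import Mathlib

section
/- Let V = ⊕_{d∈ℕ} V_d be a graded vector space over a field K of characteristic zero, with each V_d finite-dimensional and V_d = 0 for all but finitely many d, set b_d = dim V_d, and let m ∈ ℕ. For n ∈ ℕ define the graded vector space F_n(V,m) = ⊕_N ⊗_{l≥1} S^{N_l}(V[m(l-1)]), the sum over all finitely supported functions N : {1,2,3,…} → ℕ with ∑_l l·N_l = n. Then in ℤ[[t,q]] one has ∑_{n≥0} p_t(F_n(V,m)) q^n = ∏_{l≥1} [ ∏_{d odd} (1 + t^d q^l)^{b_{d - m(l-1)}} / ∏_{d even} (1 - t^d q^l)^{b_{d - m(l-1)}} ], where b_{d-m(l-1)} = 0 when d < m(l-1). (For V = H^*(X) of a closed 2m-dimensional manifold X, F_n(V,m) is the delocalized equivariant cohomology H^*(X^n,S_n) with the physicists' shifted grading, so this computes its Poincaré polynomials.) -/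
/-!
STATEMENT 4.  A graded vector space `V` over a field of characteristic zero
with finite-dimensional components, almost all zero, is recorded by its
dimension function `b : ℕ →₀ ℕ`, `b d = dim V_d`; let `m : ℕ`.

For `n : ℕ` we consider `F_n(V,m) = ⊕_N ⊗_{l≥1} S^{N_l}(V[m(l-1)])`, the sum
over finitely supported `N : {1,2,…} → ℕ` with `∑_l l·N_l = n`, where `S` is
the graded symmetric power and `V[j]` the shift (`V[j]_d = V_{d-j}`), tensor
products being graded by total degree.  A basis of `F_n(V,m)` is given by the
finitely supported multiplicity functions `M` on `{1,2,…} × (basis of V)`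
(a pair `(l, v)` indexes the basis vector `v` of the `l`-th factor `V[m(l-1)]`,
of degree `deg v + m(l-1)`) such that pairs of odd degree get multiplicity
`≤ 1`, and `∑ l·M(l,v) = n`; the degree of such an `M` is
`∑ M(l,v)·(deg v + m(l-1))`.  `fDim b m n e` below is the number of such `M`
of degree `e`, i.e. `dim F_n(V,m)_e`; in the encoding the first component
`v.1 : ℕ` of an index stands for `l - 1`.

The theorem states, in `ℤ[[t,q]]` (`t = X 0`, `q = X 1`), the identity
`∑_{n≥0} p_t(F_n(V,m)) q^n
  = ∏_{l≥1} [∏_{d odd} (1+t^d q^l)^{b_{d-m(l-1)}} / ∏_{d even} (1-t^d q^l)^{b_{d-m(l-1)}}]`,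
with `b_{d-m(l-1)} = 0` for `d < m(l-1)`.  The infinite product over `l ≥ 1`
converges `q`-adically (its `l`-th factor is `≡ 1 mod q^l`), so the identity is
expressed coefficientwise: the coefficient at any exponent `E` of the left-hand
side equals the corresponding coefficient of the (finite) product of the
factors with `1 ≤ l ≤ E(q)`, the omitted factors not affecting it.  Divisions
are by units of `ℤ[[t,q]]`, interpreted via `Ring.inverse`.
-/

open PowerSeries Finset

/-- Dimension function of the shifted graded vector space `V[j]`. -/
noncomputable def shiftF (b : ℕ →₀ ℕ) (j : ℕ) : ℕ →₀ ℕ :=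
  Finsupp.embDomain (addRightEmbedding j) b

/-- `fDim b m n e` is the dimension of the degree-`e` component of
`F_n(V,m) = ⊕_{∑ l N_l = n} ⊗_{l≥1} S^{N_l}(V[m(l-1)])` where `dim V_d = b d`. -/
noncomputable def fDim (b : ℕ →₀ ℕ) (m n e : ℕ) : ℕ :=
  Nat.card {M : (ℕ × Σ d : ℕ, Fin (b d)) →₀ ℕ //
    (∀ v, Odd (v.2.1 + m * v.1) → M v ≤ 1) ∧
      (M.sum fun v k => (v.1 + 1) * k) = n ∧
      (M.sum fun v k => k * (v.2.1 + m * v.1)) = e}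

/-- The `l`-th factor `∏_{d odd} (1+t^d q^l)^{b_{d-m(l-1)}} / ∏_{d even} (1-t^d q^l)^{b_{d-m(l-1)}}`
of the right-hand side. -/
noncomputable def rhsFactor (b : ℕ →₀ ℕ) (m l : ℕ) : MvPowerSeries (Fin 2) ℤ :=
  (∏ d ∈ (shiftF b (m * (l - 1))).support.filter (fun d => Odd d),
      (1 + (MvPowerSeries.X 0 : MvPowerSeries (Fin 2) ℤ) ^ d * MvPowerSeries.X 1 ^ l)
        ^ (shiftF b (m * (l - 1)) d)) *
    Ring.inverse (∏ d ∈ (shiftF b (m * (l - 1))).support.filter (fun d => Even d),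
      (1 - (MvPowerSeries.X 0 : MvPowerSeries (Fin 2) ℤ) ^ d * MvPowerSeries.X 1 ^ l)
        ^ (shiftF b (m * (l - 1)) d))

open scoped Classical in
/-- geometric series `∑_k X^{k w}`. -/
noncomputable def geom (w : Fin 2 →₀ ℕ) : MvPowerSeries (Fin 2) ℤ :=
  fun u => if ∃ k : ℕ, u = k • w then 1 else 0

open scoped Classical in
lemma coeff_geom (w u : Fin 2 →₀ ℕ) :
    MvPowerSeries.coeff u (geom w) = if ∃ k : ℕ, u = k • w then 1 else 0 := by
  rw [MvPowerSeries.coeff_apply]; rfl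

lemma one_sub_mul_geom (w : Fin 2 →₀ ℕ) (hw : w ≠ 0) :
    (1 - MvPowerSeries.monomial w 1) * geom w = 1 := by
  classical
  ext u
  rw [sub_mul, one_mul, map_sub, MvPowerSeries.coeff_monomial_mul, coeff_geom,
    MvPowerSeries.coeff_one]
  simp only [coeff_geom, one_mul]
  by_cases hu : u = 0
  · subst hu
    rw [if_pos ⟨0, by simp⟩, if_neg (fun h => hw (le_antisymm h bot_le) : ¬ w ≤ 0), if_pos rfl]
    ring
  · rw [if_neg hu]
    by_cases hA : ∃ k : ℕ, u = k • w
    · obtain ⟨k, rfl⟩ := hA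
      obtain ⟨k, rfl⟩ : ∃ j, k = j + 1 := by
        cases k with
        | zero => simp at hu
        | succ j => exact ⟨j, rfl⟩
      rw [if_pos ⟨k+1, rfl⟩,
        if_pos (by rw [add_smul, one_smul]; exact le_add_self : w ≤ (k+1)•w),
        if_pos ⟨k, by rw [add_smul, one_smul, add_tsub_cancel_right]⟩]
      ring
    · rw [if_neg hA]
      by_cases hB : w ≤ u
      · rw [if_pos hB, if_neg (fun ⟨j, hj⟩ => hA
          ⟨j+1, by rw [add_smul, one_smul, ← hj, tsub_add_cancel_of_le hB]⟩)]
        ring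
      · rw [if_neg hB]; ring

/-- The weight of (degree `D`, symmetric-power index `l`). -/
noncomputable def wt (D l : ℕ) : Fin 2 →₀ ℕ :=
  Finsupp.single 0 D + Finsupp.single 1 l

lemma wt_apply0 (D l : ℕ) : wt D l 0 = D := by simp [wt]
lemma wt_apply1 (D l : ℕ) : wt D l 1 = l := by simp [wt]

lemma wt_ne_zero (D l : ℕ) (hl : l ≠ 0) : wt D l ≠ 0 := by
  intro h
  have := DFunLike.congr_fun h 1
  rw [wt_apply1] at this
  exact hl this

open scoped Classical in
noncomputable def gfac (w : Fin 2 →₀ ℕ) (od : Prop) : MvPowerSeries (Fin 2) ℤ :=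
  if od then 1 + MvPowerSeries.monomial w 1 else geom w

open scoped Classical in
lemma coeff_gfac (w : Fin 2 →₀ ℕ) (hw : w ≠ 0) (od : Prop) (u : Fin 2 →₀ ℕ) :
    MvPowerSeries.coeff u (gfac w od) =
      if ∃ k : ℕ, (od → k ≤ 1) ∧ u = k • w then 1 else 0 := by
  classical
  unfold gfac
  by_cases ho : od
  · rw [if_pos ho, map_add, MvPowerSeries.coeff_one, MvPowerSeries.coeff_monomial]
    by_cases h0 : u = 0
    · subst h0
      rw [if_pos rfl, if_neg (fun h : (0 : Fin 2 →₀ ℕ) = w => hw h.symm),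
        if_pos ⟨0, fun _ => Nat.zero_le 1, by rw [zero_smul]⟩]
      ring
    · rw [if_neg h0]
      by_cases h1 : u = w
      · rw [if_pos h1, if_pos ⟨1, fun _ => le_refl 1, by rw [one_smul]; exact h1⟩]
        ring
      · rw [if_neg h1, if_neg]
        · ring
        · rintro ⟨k, hk, rfl⟩
          have hk1 := hk ho
          interval_cases k
          · exact h0 (zero_smul ℕ w)
          · exact h1 (one_smul ℕ w)
  · rw [if_neg ho, coeff_geom]
    exact if_congr ⟨fun ⟨k, hk⟩ => ⟨k, fun h => absurd h ho, hk⟩,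
      fun ⟨k, _, hk⟩ => ⟨k, hk⟩⟩ rfl rfl

lemma ringInverse_eq {A : Type*} [CommRing A] {a c : A} (h : a * c = 1) :
    Ring.inverse a = c := by
  obtain ⟨u, rfl⟩ := IsUnit.of_mul_eq_one c h
  rw [Ring.inverse_unit]
  exact Units.inv_eq_of_mul_eq_one_right h

lemma X_mul_X (d l : ℕ) :
    (MvPowerSeries.X 0 : MvPowerSeries (Fin 2) ℤ) ^ d * MvPowerSeries.X 1 ^ l =
      MvPowerSeries.monomial (wt d l) 1 := by
  rw [MvPowerSeries.X_pow_eq, MvPowerSeries.X_pow_eq, MvPowerSeries.monomial_mul_monomial,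
    one_mul, wt]

noncomputable def SV (b : ℕ →₀ ℕ) : Finset (Σ d : ℕ, Fin (b d)) :=
  b.support.sigma fun _ => Finset.univ

lemma mem_SV (b : ℕ →₀ ℕ) (v : Σ d : ℕ, Fin (b d)) : v ∈ SV b := by
  simp only [SV, Finset.mem_sigma, Finset.mem_univ, and_true, Finsupp.mem_support_iff]
  exact v.2.pos.ne'

noncomputable def gf (b : ℕ →₀ ℕ) (m : ℕ) (i : ℕ × Σ d : ℕ, Fin (b d)) :
    MvPowerSeries (Fin 2) ℤ :=
  gfac (wt (i.2.1 + m * i.1) (i.1 + 1)) (Odd (i.2.1 + m * i.1))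

lemma rhsFactor_eq (b : ℕ →₀ ℕ) (m l' : ℕ) :
    rhsFactor b m (l' + 1) = ∏ v ∈ SV b, gf b m (l', v) := by
  classical
  set j := m * l' with hj
  have hjj : m * ((l' + 1) - 1) = j := by simp [hj]
  unfold rhsFactor
  rw [hjj]
  have hinv : Ring.inverse (∏ d ∈ (shiftF b j).support.filter (fun d => Even d),
      (1 - (MvPowerSeries.X 0 : MvPowerSeries (Fin 2) ℤ) ^ d * MvPowerSeries.X 1 ^ (l'+1))
        ^ (shiftF b j d))
      = ∏ d ∈ (shiftF b j).support.filter (fun d => Even d),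
          (geom (wt d (l'+1))) ^ (shiftF b j d) := by
    apply ringInverse_eq
    rw [← Finset.prod_mul_distrib]
    apply Finset.prod_eq_one
    intro d _
    rw [← mul_pow, X_mul_X, one_sub_mul_geom _ (wt_ne_zero d (l'+1) (Nat.succ_ne_zero l')),
      one_pow]
  rw [hinv]
  have hodd : (∏ d ∈ (shiftF b j).support.filter (fun d => Odd d),
      (1 + (MvPowerSeries.X 0 : MvPowerSeries (Fin 2) ℤ) ^ d * MvPowerSeries.X 1 ^ (l'+1))
        ^ (shiftF b j d))
      = ∏ d ∈ (shiftF b j).support.filter (fun d => Odd d),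
          (gfac (wt d (l'+1)) (Odd d)) ^ (shiftF b j d) := by
    apply Finset.prod_congr rfl
    intro d hd
    rw [X_mul_X, gfac, if_pos (Finset.mem_filter.mp hd).2]
  have heven : (∏ d ∈ (shiftF b j).support.filter (fun d => Even d),
      (geom (wt d (l'+1))) ^ (shiftF b j d))
      = ∏ d ∈ (shiftF b j).support.filter (fun d => ¬ Odd d),
          (gfac (wt d (l'+1)) (Odd d)) ^ (shiftF b j d) := by
    rw [show (shiftF b j).support.filter (fun d => Even d)
        = (shiftF b j).support.filter (fun d => ¬ Odd d) from
      Finset.filter_congr (fun d _ => (Nat.not_odd_iff_even).symm)]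
    apply Finset.prod_congr rfl
    intro d hd
    rw [gfac, if_neg (Finset.mem_filter.mp hd).2]
  rw [hodd, heven, Finset.prod_filter_mul_prod_filter_not]
  rw [show (shiftF b j).support = b.support.map (addRightEmbedding j) from
      Finsupp.support_embDomain _ _, Finset.prod_map]
  have happ : ∀ d, shiftF b j (addRightEmbedding j d) = b d := fun d =>
    Finsupp.embDomain_apply_self _ _ _
  rw [SV, Finset.prod_sigma]
  apply Finset.prod_congr rfl
  intro d _
  simp only [gf]
  rw [Finset.prod_const, Finset.card_univ, Fintype.card_fin, happ d]
  simp only [addRightEmbedding_apply]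
  rfl

section Counting

variable (b : ℕ →₀ ℕ) (m : ℕ)

noncomputable def fwd (M : (ℕ × Σ d : ℕ, Fin (b d)) →₀ ℕ) :
    (ℕ × Σ d : ℕ, Fin (b d)) →₀ (Fin 2 →₀ ℕ) :=
  Finsupp.onFinset M.support (fun i => M i • wt (i.2.1 + m * i.1) (i.1 + 1))
    (fun i h => Finsupp.mem_support_iff.mpr (fun h0 => h (by simp [h0])))

noncomputable def bwd (φ : (ℕ × Σ d : ℕ, Fin (b d)) →₀ (Fin 2 →₀ ℕ)) :
    (ℕ × Σ d : ℕ, Fin (b d)) →₀ ℕ :=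
  Finsupp.onFinset φ.support (fun i => φ i 1 / (i.1 + 1))
    (fun i h => Finsupp.mem_support_iff.mpr (fun h0 => h (by simp [h0])))

lemma fwd_apply (M) (i) : fwd b m M i = M i • wt (i.2.1 + m * i.1) (i.1 + 1) :=
  Finsupp.onFinset_apply

lemma bwd_apply (φ) (i) : bwd b φ i = φ i 1 / (i.1 + 1) :=
  Finsupp.onFinset_apply

lemma bwd_eq_of (φ) (i) (k : ℕ) (h : φ i = k • wt (i.2.1 + m * i.1) (i.1 + 1)) :
    bwd b φ i = k := by
  rw [bwd_apply, h, Finsupp.smul_apply, wt_apply1, smul_eq_mul,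
    Nat.mul_div_cancel _ (Nat.succ_pos i.1)]

lemma bwd_fwd (M) : bwd b (fwd b m M) = M := by
  ext i
  exact bwd_eq_of b m _ i (M i) (fwd_apply b m M i)

lemma finsupp_fin2_ext {f g : Fin 2 →₀ ℕ} (h0 : f 0 = g 0) (h1 : f 1 = g 1) : f = g := by
  ext s
  fin_cases s
  · exact h0
  · exact h1

end Counting

section Counting2

variable (b : ℕ →₀ ℕ) (m : ℕ)

open scoped Classical in
lemma fwd_mem (E : Fin 2 →₀ ℕ) (M : (ℕ × Σ d : ℕ, Fin (b d)) →₀ ℕ)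
    (hodd : ∀ v, Odd (v.2.1 + m * v.1) → M v ≤ 1)
    (h1 : (M.sum fun v k => (v.1 + 1) * k) = E 1)
    (h0 : (M.sum fun v k => k * (v.2.1 + m * v.1)) = E 0) :
    fwd b m M ∈ (Finset.finsuppAntidiag ((Finset.range (E 1)) ×ˢ SV b) E).filter
      (fun φ => ∀ i ∈ (Finset.range (E 1)) ×ˢ SV b,
        ∃ k : ℕ, (Odd (i.2.1 + m * i.1) → k ≤ 1) ∧
          φ i = k • wt (i.2.1 + m * i.1) (i.1 + 1)) := by
  classical
  have hsupp : M.support ⊆ (Finset.range (E 1)) ×ˢ SV b := by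
    intro i hi
    rw [Finset.mem_product]
    refine ⟨Finset.mem_range.mpr ?_, mem_SV b i.2⟩
    have hterm : (i.1 + 1) * M i ≤ E 1 := by
      rw [← h1, Finsupp.sum]
      exact Finset.single_le_sum (f := fun v => (v.1 + 1) * M v)
        (fun v _ => Nat.zero_le _) hi
    have hMi : M i ≠ 0 := Finsupp.mem_support_iff.mp hi
    have h2 : (i.1 + 1) ≤ (i.1 + 1) * M i :=
      Nat.le_mul_of_pos_right _ (Nat.pos_of_ne_zero hMi)
    omega
  rw [Finset.mem_filter, Finset.mem_finsuppAntidiag]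
  refine ⟨⟨?_, Finsupp.support_onFinset_subset.trans hsupp⟩, ?_⟩
  · apply finsupp_fin2_ext
    · rw [Finsupp.finset_sum_apply]
      calc ∑ i ∈ (Finset.range (E 1)) ×ˢ SV b, (fwd b m M i) 0
          = ∑ i ∈ (Finset.range (E 1)) ×ˢ SV b, M i * (i.2.1 + m * i.1) := by
            refine Finset.sum_congr rfl fun i _ => ?_
            rw [fwd_apply, Finsupp.smul_apply, wt_apply0, smul_eq_mul]
        _ = ∑ i ∈ M.support, M i * (i.2.1 + m * i.1) :=
            (Finset.sum_subset hsupp (fun i _ hni => by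
              rw [Finsupp.notMem_support_iff.mp hni, zero_mul])).symm
        _ = E 0 := by rw [← h0]; rfl
    · rw [Finsupp.finset_sum_apply]
      calc ∑ i ∈ (Finset.range (E 1)) ×ˢ SV b, (fwd b m M i) 1
          = ∑ i ∈ (Finset.range (E 1)) ×ˢ SV b, (i.1 + 1) * M i := by
            refine Finset.sum_congr rfl fun i _ => ?_
            rw [fwd_apply, Finsupp.smul_apply, wt_apply1, smul_eq_mul, mul_comm]
        _ = ∑ i ∈ M.support, (i.1 + 1) * M i :=
            (Finset.sum_subset hsupp (fun i _ hni => by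
              rw [Finsupp.notMem_support_iff.mp hni, mul_zero])).symm
        _ = E 1 := by rw [← h1]; rfl
  · intro i _
    exact ⟨M i, hodd i, fwd_apply b m M i⟩

open scoped Classical in
lemma bwd_spec (E : Fin 2 →₀ ℕ) (φ : (ℕ × Σ d : ℕ, Fin (b d)) →₀ (Fin 2 →₀ ℕ))
    (hφ : φ ∈ (Finset.finsuppAntidiag ((Finset.range (E 1)) ×ˢ SV b) E).filter
      (fun φ => ∀ i ∈ (Finset.range (E 1)) ×ˢ SV b,
        ∃ k : ℕ, (Odd (i.2.1 + m * i.1) → k ≤ 1) ∧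
          φ i = k • wt (i.2.1 + m * i.1) (i.1 + 1))) :
    (∀ v, Odd (v.2.1 + m * v.1) → bwd b φ v ≤ 1) ∧
      ((bwd b φ).sum fun v k => (v.1 + 1) * k) = E 1 ∧
      ((bwd b φ).sum fun v k => k * (v.2.1 + m * v.1)) = E 0 ∧
      fwd b m (bwd b φ) = φ := by
  classical
  rw [Finset.mem_filter, Finset.mem_finsuppAntidiag] at hφ
  obtain ⟨⟨hsum, hss⟩, hP⟩ := hφ
  have hall : ∀ i, ∃ k : ℕ, (Odd (i.2.1 + m * i.1) → k ≤ 1) ∧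
      φ i = k • wt (i.2.1 + m * i.1) (i.1 + 1) := by
    intro i
    by_cases h : i ∈ (Finset.range (E 1)) ×ˢ SV b
    · exact hP i h
    · refine ⟨0, fun _ => Nat.zero_le 1, ?_⟩
      rw [Finsupp.notMem_support_iff.mp (fun hs => h (hss hs)), zero_smul]
  have key : ∀ i, φ i = bwd b φ i • wt (i.2.1 + m * i.1) (i.1 + 1) := by
    intro i
    obtain ⟨k, _, hk⟩ := hall i
    rw [bwd_eq_of b m φ i k hk]; exact hk
  have hss' : (bwd b φ).support ⊆ (Finset.range (E 1)) ×ˢ SV b :=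
    Finsupp.support_onFinset_subset.trans hss
  refine ⟨?_, ?_, ?_, ?_⟩
  · intro v hv
    obtain ⟨k, hk, he⟩ := hall v
    rw [bwd_eq_of b m φ v k he]
    exact hk hv
  · rw [Finsupp.sum_of_support_subset _ hss' _ (fun i _ => by rw [mul_zero])]
    calc ∑ i ∈ (Finset.range (E 1)) ×ˢ SV b, (i.1 + 1) * bwd b φ i
        = ∑ i ∈ (Finset.range (E 1)) ×ˢ SV b, φ i 1 := by
          refine Finset.sum_congr rfl fun i _ => ?_
          conv_rhs => rw [key i]
          rw [Finsupp.smul_apply, wt_apply1, smul_eq_mul, mul_comm]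
      _ = E 1 := by rw [← Finsupp.finset_sum_apply, hsum]
  · rw [Finsupp.sum_of_support_subset _ hss' _ (fun i _ => by rw [zero_mul])]
    calc ∑ i ∈ (Finset.range (E 1)) ×ˢ SV b, bwd b φ i * (i.2.1 + m * i.1)
        = ∑ i ∈ (Finset.range (E 1)) ×ˢ SV b, φ i 0 := by
          refine Finset.sum_congr rfl fun i _ => ?_
          conv_rhs => rw [key i]
          rw [Finsupp.smul_apply, wt_apply0, smul_eq_mul]
      _ = E 0 := by rw [← Finsupp.finset_sum_apply, hsum]
  · refine Finsupp.ext fun i => ?_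
    rw [fwd_apply]
    exact (key i).symm

open scoped Classical in
lemma card_eq (E : Fin 2 →₀ ℕ) :
    fDim b m (E 1) (E 0) =
      ((Finset.finsuppAntidiag ((Finset.range (E 1)) ×ˢ SV b) E).filter
        (fun φ => ∀ i ∈ (Finset.range (E 1)) ×ˢ SV b,
          ∃ k : ℕ, (Odd (i.2.1 + m * i.1) → k ≤ 1) ∧
            φ i = k • wt (i.2.1 + m * i.1) (i.1 + 1))).card := by
  classical
  rw [fDim, ← Nat.card_eq_finsetCard]
  exact Nat.card_congr
    ⟨fun M => ⟨fwd b m M.1, fwd_mem b m E M.1 M.2.1 M.2.2.1 M.2.2.2⟩,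
     fun φ => ⟨bwd b φ.1, (bwd_spec b m E φ.1 φ.2).1, (bwd_spec b m E φ.1 φ.2).2.1,
       (bwd_spec b m E φ.1 φ.2).2.2.1⟩,
     fun M => Subtype.ext (bwd_fwd b m M.1),
     fun φ => Subtype.ext (bwd_spec b m E φ.1 φ.2).2.2.2⟩

end Counting2

theorem poincare_series_delocalized_symmetric_product (b : ℕ →₀ ℕ) (m : ℕ)
    (E : Fin 2 →₀ ℕ) :
    (fDim b m (E 1) (E 0) : ℤ) =
      MvPowerSeries.coeff E (∏ l ∈ Finset.Icc 1 (E 1), rhsFactor b m l) := by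
  classical
  have h1 : ∏ l ∈ Finset.Icc 1 (E 1), rhsFactor b m l
      = ∏ i ∈ (Finset.range (E 1)) ×ˢ SV b, gf b m i := by
    rw [Finset.prod_product, ← Finset.Ico_add_one_right_eq_Icc, Finset.prod_Ico_eq_prod_range,
      Nat.add_sub_cancel]
    exact Finset.prod_congr rfl fun l' _ => by rw [add_comm 1 l', rhsFactor_eq b m l']
  rw [h1, MvPowerSeries.coeff_prod]
  have h2 : ∀ φ ∈ Finset.finsuppAntidiag ((Finset.range (E 1)) ×ˢ SV b) E,
      (∏ i ∈ (Finset.range (E 1)) ×ˢ SV b, MvPowerSeries.coeff (φ i) (gf b m i))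
      = if (∀ i ∈ (Finset.range (E 1)) ×ˢ SV b,
          ∃ k : ℕ, (Odd (i.2.1 + m * i.1) → k ≤ 1) ∧
            φ i = k • wt (i.2.1 + m * i.1) (i.1 + 1)) then (1 : ℤ) else 0 := by
    intro φ _
    rw [← Finset.prod_boole]
    exact Finset.prod_congr rfl fun i _ =>
      coeff_gfac _ (wt_ne_zero _ _ (Nat.succ_ne_zero _)) _ _
  rw [Finset.sum_congr rfl h2, Finset.sum_boole, card_eq b m E]
end

section
/- Let W = ⊕_{(s,t)∈ℕ×ℕ} W_{s,t} be a bigraded vector space over a field K of characteristic zero, with every W_{s,t} finite-dimensional and all but finitely many zero, set h^{s,t} = dim W_{s,t}, and let k ∈ ℕ. For n ∈ ℕ define the bigraded vector space F_n(W,k) = ⊕_N ⊗_{l≥1} S^{N_l}(W[k(l-1), k(l-1)]), the sum over all finitely supported functions N : {1,2,3,…} → ℕ with ∑_l l·N_l = n. Then in ℤ[[x,y,q]] one has ∑_{n≥0} h_{x,y}(F_n(W,k)) q^n = ∏_{l≥1} [ ∏_{s+t odd} (1 + x^{s+k(l-1)} y^{t+k(l-1)} q^l)^{h^{s,t}} /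 ∏_{s+t even} (1 - x^{s+k(l-1)} y^{t+k(l-1)} q^l)^{h^{s,t}} ]. (For W = H^{*,*}(X) of a closed complex manifold X of complex dimension 2k, F_n(W,k) is the delocalized equivariant Dolbeault cohomology H^{*,*}(X^n,S_n) with the physicists' shifted bigrading.) -/
/-!
STATEMENT 5.  A bigraded vector space `W` over a field of characteristic zero
with finite-dimensional components, almost all zero, is recorded by its
dimension function `h : ℕ × ℕ →₀ ℕ`, `h (s,t) = dim W_{s,t}`; let `k : ℕ`.

For `n : ℕ` we consider `F_n(W,k) = ⊕_N ⊗_{l≥1} S^{N_l}(W[k(l-1),k(l-1)])`,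
the sum over finitely supported `N : {1,2,…} → ℕ` with `∑_l l·N_l = n`, where
`S` is the graded symmetric power (parity by total degree) and `W[a,b]` the
shift; tensor products are bigraded by componentwise sums.  A basis of
`F_n(W,k)` is given by the finitely supported multiplicity functions `M` on
`{1,2,…} × (basis of W)` — a pair `(l,w)` indexing the basis vector `w` of the
`l`-th factor, of bidegree `(s + k(l-1), t + k(l-1))` for `w` of bidegree
`(s,t)` — such that pairs of odd total degree get multiplicity `≤ 1` and
`∑ l·M(l,w) = n`; bidegrees add.  `fDim2 h k n e` below counts such `M` of
total bidegree `e`, i.e. it is `dim F_n(W,k)_e`; in the encoding the first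
component `v.1 : ℕ` of an index stands for `l - 1`.

The theorem states, in `ℤ[[x,y,q]]` (`x = X 0`, `y = X 1`, `q = X 2`), the
identity
`∑_{n≥0} h_{x,y}(F_n(W,k)) q^n
  = ∏_{l≥1} [∏_{s+t odd} (1 + x^{s+k(l-1)} y^{t+k(l-1)} q^l)^{h^{s,t}}
             / ∏_{s+t even} (1 - x^{s+k(l-1)} y^{t+k(l-1)} q^l)^{h^{s,t}}]`.
The infinite product over `l ≥ 1` converges `q`-adically (the `l`-th factor is
`≡ 1 mod q^l`), so the identity is expressed coefficientwise: at any exponent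
`E`, the coefficient of the left-hand side equals that of the finite product
of the factors with `1 ≤ l ≤ E(q)`.  Divisions are by units of `ℤ[[x,y,q]]`,
interpreted via `Ring.inverse`.
-/

open PowerSeries Finset

/-- `fDim2 h k n e` is the dimension of the bidegree-`e` component of
`F_n(W,k) = ⊕_{∑ l N_l = n} ⊗_{l≥1} S^{N_l}(W[k(l-1),k(l-1)])` where `dim W_p = h p`. -/
noncomputable def fDim2 (h : ℕ × ℕ →₀ ℕ) (k n : ℕ) (e : ℕ × ℕ) : ℕ :=
  Nat.card {M : (ℕ × Σ p : ℕ × ℕ, Fin (h p)) →₀ ℕ //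
    (∀ v, Odd (v.2.1.1 + v.2.1.2) → M v ≤ 1) ∧
      (M.sum fun v j => (v.1 + 1) * j) = n ∧
      (M.sum fun v j => j • (v.2.1 + (k * v.1, k * v.1))) = e}

/-- The `l`-th factor of the right-hand side. -/
noncomputable def rhsFactor2 (h : ℕ × ℕ →₀ ℕ) (k l : ℕ) : MvPowerSeries (Fin 3) ℤ :=
  (∏ p ∈ h.support.filter (fun p => Odd (p.1 + p.2)),
      (1 + (MvPowerSeries.X 0 : MvPowerSeries (Fin 3) ℤ) ^ (p.1 + k * (l - 1)) *
        MvPowerSeries.X 1 ^ (p.2 + k * (l - 1)) * MvPowerSeries.X 2 ^ l) ^ (h p)) *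
    Ring.inverse (∏ p ∈ h.support.filter (fun p => Even (p.1 + p.2)),
      (1 - (MvPowerSeries.X 0 : MvPowerSeries (Fin 3) ℤ) ^ (p.1 + k * (l - 1)) *
        MvPowerSeries.X 1 ^ (p.2 + k * (l - 1)) * MvPowerSeries.X 2 ^ l) ^ (h p))

open MvPowerSeries

noncomputable section HodgeAux

open scoped Classical

abbrev PS3 := MvPowerSeries (Fin 3) ℤ

def mon3 (d : Fin 3 →₀ ℕ) : PS3 := MvPowerSeries.monomial (R := ℤ) d 1

def geom3 (d : Fin 3 →₀ ℕ) : PS3 := fun e => if ∃ j : ℕ, e = j • d then 1 else 0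

lemma coeff_geom3 (d e : Fin 3 →₀ ℕ) :
    MvPowerSeries.coeff (R := ℤ) e (geom3 d) = if ∃ j : ℕ, e = j • d then 1 else 0 := rfl

lemma geom3_mul (d : Fin 3 →₀ ℕ) (hd : d ≠ 0) : (1 - mon3 d) * geom3 d = 1 := by
  ext e
  rw [MvPowerSeries.coeff_one, sub_mul, one_mul, map_sub, mon3, coeff_monomial_mul, coeff_geom3]
  by_cases he : e = 0
  · subst he
    rw [if_pos ⟨0, by simp⟩, if_neg (fun hle => hd (nonpos_iff_eq_zero.mp hle)), if_pos rfl]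
    ring
  · rw [if_neg he]
    by_cases h1 : ∃ j : ℕ, e = j • d
    · obtain ⟨j, rfl⟩ := h1
      match j with
      | 0 => exact absurd (by simp) he
      | (j'+1) =>
        have hle : d ≤ (j' + 1) • d := by
          rw [succ_nsmul]; exact le_add_self
        rw [if_pos hle, if_pos ⟨j'+1, rfl⟩, one_mul, coeff_geom3,
          if_pos ⟨j', by rw [succ_nsmul, add_tsub_cancel_right]⟩]
        ring
    · rw [if_neg h1]
      by_cases hle : d ≤ e
      · rw [if_pos hle, one_mul, coeff_geom3, if_neg, zero_sub, neg_zero]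
        rintro ⟨j, hj⟩
        exact h1 ⟨j + 1, by rw [succ_nsmul, ← hj, tsub_add_cancel_of_le hle]⟩
      · rw [if_neg hle, sub_zero]

lemma ring_inverse_eq {a b : PS3} (hab : a * b = 1) : Ring.inverse a = b := by
  obtain ⟨u, rfl⟩ := IsUnit.of_mul_eq_one (a := a) b hab
  rw [Ring.inverse_unit]
  exact Units.inv_eq_of_mul_eq_one_right hab

lemma inverse_one_sub_mon3 (d : Fin 3 →₀ ℕ) (hd : d ≠ 0) :
    Ring.inverse (1 - mon3 d) = geom3 d := ring_inverse_eq (geom3_mul d hd)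

lemma ring_inverse_prod {α : Type*} (s : Finset α) (g : α → PS3) :
    Ring.inverse (∏ i ∈ s, g i) = ∏ i ∈ s, Ring.inverse (g i) := by
  induction s using Finset.cons_induction with
  | empty => simp
  | cons a s ha ih => rw [Finset.prod_cons, Finset.prod_cons, Ring.mul_inverse_rev, ih, mul_comm]

lemma coeff_one_add_mon3 (d : Fin 3 →₀ ℕ) (hd : d ≠ 0) (e : Fin 3 →₀ ℕ) :
    MvPowerSeries.coeff (R := ℤ) e (1 + mon3 d) = if ∃ j : ℕ, e = j • d ∧ j ≤ 1 then 1 else 0 := by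
  rw [map_add, MvPowerSeries.coeff_one, mon3, MvPowerSeries.coeff_monomial]
  by_cases h0 : e = 0
  · subst h0
    rw [if_pos rfl, if_neg (fun hh : (0 : Fin 3 →₀ ℕ) = d => hd hh.symm),
      if_pos ⟨0, by simp, Nat.zero_le 1⟩]
    ring
  · rw [if_neg h0]
    by_cases h1 : e = d
    · subst h1
      rw [if_pos rfl, if_pos ⟨1, by simp, le_refl 1⟩]
      ring
    · rw [if_neg h1, if_neg, add_zero]
      rintro ⟨j, hj, hj1⟩
      interval_cases j
      · exact h0 (by simpa using hj)
      · exact h1 (by simpa using hj)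

section Param

variable (h : ℕ × ℕ →₀ ℕ) (k : ℕ)

abbrev Idx (h : ℕ × ℕ →₀ ℕ) := ℕ × Σ p : ℕ × ℕ, Fin (h p)

def dvec (v : Idx h) : Fin 3 →₀ ℕ :=
  Finsupp.single 0 (v.2.1.1 + k * v.1) + Finsupp.single 1 (v.2.1.2 + k * v.1)
    + Finsupp.single 2 (v.1 + 1)

@[simp] lemma dvec_apply0 (v : Idx h) : dvec h k v 0 = v.2.1.1 + k * v.1 := by
  simp [dvec, Finsupp.single_apply]

@[simp] lemma dvec_apply1 (v : Idx h) : dvec h k v 1 = v.2.1.2 + k * v.1 := by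
  simp [dvec, Finsupp.single_apply]

@[simp] lemma dvec_apply2 (v : Idx h) : dvec h k v 2 = v.1 + 1 := by
  simp [dvec, Finsupp.single_apply]

lemma dvec_ne_zero (v : Idx h) : dvec h k v ≠ 0 := by
  intro H
  have := DFunLike.congr_fun H (2 : Fin 3)
  simp at this

def ov (v : Idx h) : Prop := Odd (v.2.1.1 + v.2.1.2)

def fv (v : Idx h) : PS3 :=
  if ov h v then 1 + mon3 (dvec h k v) else Ring.inverse (1 - mon3 (dvec h k v))

lemma coeff_fv (v : Idx h) (e : Fin 3 →₀ ℕ) :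
    MvPowerSeries.coeff (R := ℤ) e (fv h k v) =
      if ∃ j : ℕ, e = j • dvec h k v ∧ (ov h v → j ≤ 1) then 1 else 0 := by
  unfold fv
  by_cases hov : ov h v
  · rw [if_pos hov, coeff_one_add_mon3 _ (dvec_ne_zero h k v)]
    simp [hov]
  · rw [if_neg hov, inverse_one_sub_mon3 _ (dvec_ne_zero h k v), coeff_geom3]
    simp [hov]

lemma coeff_prod_fv (s : Finset (Idx h)) (E : Fin 3 →₀ ℕ) :
    MvPowerSeries.coeff (R := ℤ) E (∏ v ∈ s, fv h k v) =
      (((finsuppAntidiag s E).filter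
        (fun u => ∀ v ∈ s, ∃ j : ℕ, u v = j • dvec h k v ∧ (ov h v → j ≤ 1))).card : ℤ) := by
  rw [MvPowerSeries.coeff_prod]
  rw [Finset.sum_congr rfl (fun u _ => Finset.prod_congr rfl (fun v _ => coeff_fv h k v (u v)))]
  rw [Finset.sum_congr rfl (fun u _ => Finset.prod_boole)]
  rw [Finset.sum_boole]


def sigAll (h : ℕ × ℕ →₀ ℕ) : Finset (Σ p : ℕ × ℕ, Fin (h p)) :=
  h.support.sigma (fun _ => Finset.univ)

lemma mem_sigAll (σ : Σ p : ℕ × ℕ, Fin (h p)) : σ ∈ sigAll h :=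
  Finset.mem_sigma.mpr
    ⟨Finsupp.mem_support_iff.mpr (Nat.pos_iff_ne_zero.mp σ.2.pos), Finset.mem_univ _⟩

lemma mon3_dvec (m : ℕ) (p : ℕ × ℕ) (i : Fin (h p)) :
    mon3 (dvec h k (m, ⟨p, i⟩)) =
      (MvPowerSeries.X 0 : PS3) ^ (p.1 + k * m) * MvPowerSeries.X 1 ^ (p.2 + k * m) *
        MvPowerSeries.X 2 ^ (m + 1) := by
  rw [MvPowerSeries.X_pow_eq, MvPowerSeries.X_pow_eq, MvPowerSeries.X_pow_eq,
    MvPowerSeries.monomial_mul_monomial, MvPowerSeries.monomial_mul_monomial, mul_one, mul_one]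
  rfl

lemma prod_sigAll_eq (m : ℕ) :
    ∏ σ ∈ sigAll h, fv h k (m, σ) = rhsFactor2 h k (m + 1) := by
  rw [sigAll, Finset.prod_sigma]
  have step1 : ∀ p ∈ h.support,
      (∏ i ∈ (Finset.univ : Finset (Fin (h p))), fv h k (m, ⟨p, i⟩)) =
      (if Odd (p.1 + p.2) then
        (1 + (MvPowerSeries.X 0 : PS3) ^ (p.1 + k * m) * MvPowerSeries.X 1 ^ (p.2 + k * m) *
          MvPowerSeries.X 2 ^ (m + 1)) ^ (h p)
       else Ring.inverse ((1 - (MvPowerSeries.X 0 : PS3) ^ (p.1 + k * m) *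
          MvPowerSeries.X 1 ^ (p.2 + k * m) * MvPowerSeries.X 2 ^ (m + 1)) ^ (h p))) := by
    intro p _
    have hbody : ∀ i : Fin (h p), fv h k (m, ⟨p, i⟩) =
        (if Odd (p.1 + p.2) then
          (1 + (MvPowerSeries.X 0 : PS3) ^ (p.1 + k * m) * MvPowerSeries.X 1 ^ (p.2 + k * m) *
            MvPowerSeries.X 2 ^ (m + 1))
         else Ring.inverse (1 - (MvPowerSeries.X 0 : PS3) ^ (p.1 + k * m) *
            MvPowerSeries.X 1 ^ (p.2 + k * m) * MvPowerSeries.X 2 ^ (m + 1))) := by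
      intro i
      unfold fv ov
      rw [mon3_dvec]
      by_cases hodd : Odd (p.1 + p.2)
      · rw [if_pos hodd, if_pos hodd]
      · rw [if_neg hodd, if_neg hodd]
    rw [Finset.prod_congr rfl (fun i _ => hbody i), Finset.prod_const, Finset.card_univ,
      Fintype.card_fin]
    split_ifs
    · rfl
    · rw [Ring.inverse_pow]
  rw [Finset.prod_congr rfl step1,
    ← Finset.prod_filter_mul_prod_filter_not h.support (fun p => Odd (p.1 + p.2))]
  unfold rhsFactor2
  congr 1
  · refine Finset.prod_congr rfl (fun p hp => ?_)
    rw [if_pos (Finset.mem_filter.mp hp).2]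
    simp only [Nat.add_sub_cancel]
  · rw [ring_inverse_prod]
    have hfe : h.support.filter (fun p => ¬ Odd (p.1 + p.2)) =
        h.support.filter (fun p => Even (p.1 + p.2)) := by
      apply Finset.filter_congr
      intro p _
      simp [Nat.not_odd_iff_even]
    rw [hfe]
    refine Finset.prod_congr rfl (fun p hp => ?_)
    rw [if_neg (Nat.not_odd_iff_even.mpr (Finset.mem_filter.mp hp).2)]
    simp only [Nat.add_sub_cancel]

lemma prod_Icc_eq (L : ℕ) :
    ∏ v ∈ (Finset.range L) ×ˢ sigAll h, fv h k v =
      ∏ l ∈ Finset.Icc 1 L, rhsFactor2 h k l := by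
  rw [Finset.prod_product]
  induction L with
  | zero => simp
  | succ L ih =>
    rw [Finset.prod_range_succ, ih, Finset.prod_Icc_succ_top (Nat.le_add_left 1 L),
      prod_sigAll_eq]

def toU (M : Idx h →₀ ℕ) : Idx h →₀ (Fin 3 →₀ ℕ) :=
  Finsupp.onFinset M.support (fun v => M v • dvec h k v)
    (fun v hv => Finsupp.mem_support_iff.mpr (fun h0 => hv (by simp [h0])))

@[simp] lemma toU_apply (M : Idx h →₀ ℕ) (v : Idx h) :
    toU h k M v = M v • dvec h k v := rfl

def toM (u : Idx h →₀ (Fin 3 →₀ ℕ)) : Idx h →₀ ℕ :=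
  Finsupp.onFinset u.support (fun v => u v 2 / (v.1 + 1))
    (fun v hv => Finsupp.mem_support_iff.mpr (fun h0 => hv (by simp [h0])))

@[simp] lemma toM_apply (u : Idx h →₀ (Fin 3 →₀ ℕ)) (v : Idx h) :
    toM h u v = u v 2 / (v.1 + 1) := rfl

lemma sum_smul_dvec_apply (M : Idx h →₀ ℕ) (i : Fin 3) :
    (M.sum fun v j => j • dvec h k v) i = M.sum fun v j => j * dvec h k v i := by
  rw [Finsupp.sum_apply]
  apply Finsupp.sum_congr
  intro v _
  rw [Finsupp.smul_apply, smul_eq_mul]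

lemma conds_toU {M : Idx h →₀ ℕ} {E : Fin 3 →₀ ℕ}
    (h2 : (M.sum fun v j => (v.1 + 1) * j) = E 2)
    (h01 : (M.sum fun v j => j • (v.2.1 + (k * v.1, k * v.1))) = (E 0, E 1)) :
    (M.sum fun v j => j • dvec h k v) = E := by
  have H0 : (M.sum fun v j => j • (v.2.1 + (k * v.1, k * v.1))).1 = E 0 := by rw [h01]
  have H1 : (M.sum fun v j => j • (v.2.1 + (k * v.1, k * v.1))).2 = E 1 := by rw [h01]
  rw [Finsupp.sum, Prod.fst_sum] at H0
  rw [Finsupp.sum, Prod.snd_sum] at H1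
  ext i
  rw [sum_smul_dvec_apply]
  have hi : i = 0 ∨ i = 1 ∨ i = 2 := by
    have hlt := i.isLt
    simp only [Fin.ext_iff]
    omega
  rcases hi with rfl | rfl | rfl
  · rw [Finsupp.sum, ← H0]
    refine Finset.sum_congr rfl (fun v _ => ?_)
    simp [smul_eq_mul, mul_add]
  · rw [Finsupp.sum, ← H1]
    refine Finset.sum_congr rfl (fun v _ => ?_)
    simp [smul_eq_mul, mul_add]
  · rw [Finsupp.sum, ← h2, Finsupp.sum]
    refine Finset.sum_congr rfl (fun v _ => ?_)
    simp [mul_comm]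

lemma conds_of_sum {M : Idx h →₀ ℕ} {E : Fin 3 →₀ ℕ}
    (hsum : (M.sum fun v j => j • dvec h k v) = E) :
    ((M.sum fun v j => (v.1 + 1) * j) = E 2 ∧
      (M.sum fun v j => j • (v.2.1 + (k * v.1, k * v.1))) = (E 0, E 1)) := by
  have e0 : (M.sum fun v j => j * dvec h k v 0) = E 0 := by
    rw [← sum_smul_dvec_apply, hsum]
  have e1 : (M.sum fun v j => j * dvec h k v 1) = E 1 := by
    rw [← sum_smul_dvec_apply, hsum]
  have e2 : (M.sum fun v j => j * dvec h k v 2) = E 2 := by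
    rw [← sum_smul_dvec_apply, hsum]
  constructor
  · rw [← e2, Finsupp.sum, Finsupp.sum]
    refine Finset.sum_congr rfl (fun v _ => ?_)
    simp [mul_comm]
  · refine Prod.ext ?_ ?_
    · rw [Finsupp.sum, Prod.fst_sum, ← e0, Finsupp.sum]
      refine Finset.sum_congr rfl (fun v _ => ?_)
      simp [smul_eq_mul, mul_add]
    · rw [Finsupp.sum, Prod.snd_sum, ← e1, Finsupp.sum]
      refine Finset.sum_congr rfl (fun v _ => ?_)
      simp [smul_eq_mul, mul_add]

lemma toU_mem {M : Idx h →₀ ℕ} {E : Fin 3 →₀ ℕ}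
    (h1 : ∀ v : Idx h, Odd (v.2.1.1 + v.2.1.2) → M v ≤ 1)
    (h2 : (M.sum fun v j => (v.1 + 1) * j) = E 2)
    (h01 : (M.sum fun v j => j • (v.2.1 + (k * v.1, k * v.1))) = (E 0, E 1)) :
    toU h k M ∈ (finsuppAntidiag ((Finset.range (E 2)) ×ˢ sigAll h) E).filter
      (fun u => ∀ v ∈ (Finset.range (E 2)) ×ˢ sigAll h,
        ∃ j : ℕ, u v = j • dvec h k v ∧ (ov h v → j ≤ 1)) := by
  have hsupp : M.support ⊆ (Finset.range (E 2)) ×ˢ sigAll h := by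
    intro v hv
    rw [Finset.mem_product]
    refine ⟨Finset.mem_range.mpr ?_, mem_sigAll h v.2⟩
    have hMv : 1 ≤ M v := Nat.one_le_iff_ne_zero.mpr (Finsupp.mem_support_iff.mp hv)
    have hle : (v.1 + 1) * M v ≤ E 2 := by
      rw [← h2]
      exact Finset.single_le_sum (f := fun w => (w.1 + 1) * M w) (fun _ _ => Nat.zero_le _) hv
    have : v.1 + 1 ≤ (v.1 + 1) * M v := Nat.le_mul_of_pos_right _ hMv
    omega
  rw [Finset.mem_filter, Finset.mem_finsuppAntidiag]
  refine ⟨⟨?_, subset_trans Finsupp.support_onFinset_subset hsupp⟩, ?_⟩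
  · refine Eq.trans ?_ (conds_toU h k h2 h01)
    rw [Finsupp.sum]
    have hz : ∀ v ∈ (Finset.range (E 2)) ×ˢ sigAll h, v ∉ M.support →
        M v • dvec h k v = 0 := fun v _ hv => by
      rw [Finsupp.notMem_support_iff.mp hv, zero_smul]
    exact (Finset.sum_subset hsupp hz).symm
  · intro v _
    exact ⟨M v, rfl, h1 v⟩

lemma toM_spec {u : Idx h →₀ (Fin 3 →₀ ℕ)} {E : Fin 3 →₀ ℕ}
    (hu : u ∈ (finsuppAntidiag ((Finset.range (E 2)) ×ˢ sigAll h) E).filter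
      (fun u => ∀ v ∈ (Finset.range (E 2)) ×ˢ sigAll h,
        ∃ j : ℕ, u v = j • dvec h k v ∧ (ov h v → j ≤ 1))) :
    ∀ v : Idx h, u v = toM h u v • dvec h k v ∧ (ov h v → toM h u v ≤ 1) := by
  rw [Finset.mem_filter, Finset.mem_finsuppAntidiag] at hu
  obtain ⟨⟨hsum, hsupp⟩, hP⟩ := hu
  intro v
  by_cases hv : v ∈ (Finset.range (E 2)) ×ˢ sigAll h
  · obtain ⟨j, hj, hj1⟩ := hP v hv
    have hval : toM h u v = j := by
      rw [toM_apply, hj, Finsupp.smul_apply, smul_eq_mul, dvec_apply2,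
        Nat.mul_div_cancel _ (Nat.succ_pos _)]
    rw [hval]
    exact ⟨hj, hj1⟩
  · have hz : u v = 0 := Finsupp.notMem_support_iff.mp (fun hmem => hv (hsupp hmem))
    have hval : toM h u v = 0 := by rw [toM_apply, hz]; simp
    rw [hval, hz, zero_smul]
    exact ⟨rfl, fun _ => Nat.zero_le 1⟩

lemma toM_mem {u : Idx h →₀ (Fin 3 →₀ ℕ)} {E : Fin 3 →₀ ℕ}
    (hu : u ∈ (finsuppAntidiag ((Finset.range (E 2)) ×ˢ sigAll h) E).filter
      (fun u => ∀ v ∈ (Finset.range (E 2)) ×ˢ sigAll h,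
        ∃ j : ℕ, u v = j • dvec h k v ∧ (ov h v → j ≤ 1))) :
    (∀ v : Idx h, Odd (v.2.1.1 + v.2.1.2) → toM h u v ≤ 1) ∧
      ((toM h u).sum fun v j => (v.1 + 1) * j) = E 2 ∧
      ((toM h u).sum fun v j => j • (v.2.1 + (k * v.1, k * v.1))) = (E 0, E 1) := by
  have hspec := toM_spec h k hu
  rw [Finset.mem_filter, Finset.mem_finsuppAntidiag] at hu
  obtain ⟨⟨hsum, hsupp⟩, hP⟩ := hu
  have hMsupp : (toM h u).support ⊆ (Finset.range (E 2)) ×ˢ sigAll h :=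
    subset_trans Finsupp.support_onFinset_subset hsupp
  have key : ((toM h u).sum fun v j => j • dvec h k v) = E := by
    rw [Finsupp.sum]
    have hz : ∀ v ∈ (Finset.range (E 2)) ×ˢ sigAll h, v ∉ (toM h u).support →
        toM h u v • dvec h k v = 0 := fun v _ hv => by
      rw [Finsupp.notMem_support_iff.mp hv, zero_smul]
    rw [Finset.sum_subset hMsupp hz,
      Finset.sum_congr rfl (fun v (_ : v ∈ (Finset.range (E 2)) ×ˢ sigAll h) =>
        ((hspec v).1).symm)]
    exact hsum
  obtain ⟨c2, c01⟩ := conds_of_sum h k key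
  exact ⟨fun v => (hspec v).2, c2, c01⟩

end Param

end HodgeAux

theorem hodge_series_delocalized_symmetric_product (h : ℕ × ℕ →₀ ℕ) (k : ℕ)
    (E : Fin 3 →₀ ℕ) :
    (fDim2 h k (E 2) (E 0, E 1) : ℤ) =
      MvPowerSeries.coeff (R := ℤ) E (∏ l ∈ Finset.Icc 1 (E 2), rhsFactor2 h k l) := by
  classical
  rw [← prod_Icc_eq h k (E 2), coeff_prod_fv h k _ E]
  refine congrArg (Nat.cast : ℕ → ℤ) ?_
  rw [fDim2, ← Nat.card_eq_finsetCard]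
  exact Nat.card_congr
    { toFun := fun Ms => ⟨toU h k Ms.1, toU_mem h k Ms.2.1 Ms.2.2.1 Ms.2.2.2⟩
      invFun := fun us => ⟨toM h us.1, toM_mem h k us.2⟩
      left_inv := fun Ms => Subtype.ext (Finsupp.ext (fun v => by
        show toU h k Ms.1 v 2 / (v.1 + 1) = Ms.1 v
        rw [toU_apply, Finsupp.smul_apply, smul_eq_mul, dvec_apply2,
          Nat.mul_div_cancel _ (Nat.succ_pos _)]))
      right_inv := fun us => Subtype.ext (Finsupp.ext (fun v =>
        ((toM_spec h k us.2 v).1).symm)) }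
end

section
/- Let W = ⊕_{(s,t)∈ℕ×ℕ} W_{s,t} be a bigraded vector space over a field K of characteristic zero, with every W_{s,t} finite-dimensional and all but finitely many zero. Define χ_{-y}(U) = ∑_{s,t} (-1)^{s+t} h^{s,t}(U) y^s ∈ ℤ[y] for any such bigraded space U. Then in ℚ[[y,q]] one has ∑_{n≥0} χ_{-y}(S^n(W)) q^n = exp( ∑_{m≥1} χ_{-y^m}(W) q^m / m ), where χ_{-y^m}(W) is χ_{-y}(W) with y replaced by y^m. (For W = H^{*,*}(X) of a compact complex manifold X this is the generating function of the Hirzebruch χ_{-y}-genera of the symmetric products X^{(n)}.) -/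
/-!
STATEMENT 6.  A bigraded vector space `W` over a field of characteristic zero
with finite-dimensional components, almost all zero, is recorded by its
dimension function `h : ℕ × ℕ →₀ ℕ`, `h (s,t) = dim W_{s,t}`.  `sDim2 h n e`
is the dimension of the bidegree-`e` component of the `n`-th graded symmetric
power `S^n(W)` (counting multisets of size `n` of basis vectors with
odd-total-degree vectors occurring at most once, bidegrees adding).

For a bigraded space `U`, `χ_{-y}(U) = ∑_{s,t} (-1)^{s+t} h^{s,t}(U) y^s`.

The theorem states in `ℚ[[y,q]]`, modelled as `ℚ[[y]][[q]]`
(`PowerSeries (PowerSeries ℚ)`, `y` the inner and `q` the outer variable), that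
`∑_{n≥0} χ_{-y}(S^n(W)) q^n = exp (∑_{m≥1} χ_{-y^m}(W) q^m / m)`.
The left-hand side has `q^n`-coefficient `∑_{s,t} (-1)^{s+t} dim S^n(W)_{s,t} y^s`
(the `t`-sum, a `tsum`, has finite support); the series inside `exp` has
`q^m`-coefficient `(1/m) χ_{-y^m}(W) = (1/m) ∑_{(s,t)} (-1)^{s+t} h^{s,t} y^{ms}`
for `m ≥ 1` and zero constant term, and `pexp` below computes the exponential
`∑_j f^j / j!` of a power series `f` with zero constant term (its `q^n`
coefficient being the finite sum `∑_{j≤n} coeff_n (f^j) / j!`).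
-/

open PowerSeries Finset

/-- Dimension of the bidegree-`e` component of the `n`-th graded symmetric power of a
bigraded vector space whose bidegree-`p` component has dimension `h p`. -/
noncomputable def sDim2 (h : ℕ × ℕ →₀ ℕ) (n : ℕ) (e : ℕ × ℕ) : ℕ :=
  Nat.card {m : (Σ p : ℕ × ℕ, Fin (h p)) →₀ ℕ //
    (∀ v, Odd (v.1.1 + v.1.2) → m v ≤ 1) ∧ (m.sum fun _ k => k) = n ∧
      (m.sum fun v k => k • v.1) = e}

/-- The exponential of a formal power series (with zero constant term) over a
`ℚ`-algebra: `pexp f = ∑_{j≥0} f^j / j!`, defined coefficientwise by the finite sum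
`coeff n (pexp f) = ∑_{j ≤ n} coeff n (f^j) / j!`. -/
noncomputable def pexp {R : Type*} [CommRing R] [Algebra ℚ R] (f : PowerSeries R) :
    PowerSeries R :=
  PowerSeries.mk fun n =>
    ∑ j ∈ Finset.range (n + 1),
      algebraMap ℚ R (1 / j.factorial) * PowerSeries.coeff n (f ^ j)

/-- `χ_{-y^m}(W) = ∑_{(s,t)} (-1)^{s+t} h^{s,t}(W) y^{ms}` as an element of `ℚ[[y]]`. -/
noncomputable def chiPoly (h : ℕ × ℕ →₀ ℕ) (m : ℕ) : PowerSeries ℚ :=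
  ∑ p ∈ h.support,
    ((-1 : ℚ) ^ (p.1 + p.2) * (h p : ℚ)) • (PowerSeries.X : PowerSeries ℚ) ^ (m * p.1)


set_option linter.unusedSectionVars false
set_option maxHeartbeats 1000000

section PexpLemmas

variable {R : Type*} [CommRing R] [Algebra ℚ R]

lemma coeff_pexp (f : R⟦X⟧) (n : ℕ) : coeff n (pexp f) =
    ∑ j ∈ range (n + 1), algebraMap ℚ R (1 / j.factorial) * coeff n (f ^ j) := by
  simp [pexp]

lemma constantCoeff_pexp (f : R⟦X⟧) : constantCoeff (pexp f) = 1 := by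
  rw [← coeff_zero_eq_constantCoeff, coeff_pexp]
  simp

lemma pexp_zero : pexp (0 : R⟦X⟧) = 1 := by
  ext n
  rw [coeff_pexp]
  rcases n with _ | n
  · simp
  · rw [coeff_one, if_neg (Nat.succ_ne_zero n)]
    apply Finset.sum_eq_zero
    intro j hj
    rcases j with _ | j
    · simp
    · simp [zero_pow]

lemma coeff_pow_eq_zero {f : R⟦X⟧} (hf : constantCoeff f = 0) {n j : ℕ} (h : n < j) :
    coeff n (f ^ j) = 0 := by
  have : (X : R⟦X⟧) ^ j ∣ f ^ j := pow_dvd_pow_of_dvd (X_dvd_iff.mpr hf) j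
  exact X_pow_dvd_iff.mp this n h

lemma nat_succ_cancel {a b : R} (n : ℕ) (hab : a * ((n : R) + 1) = b * ((n : R) + 1)) :
    a = b := by
  have h1 : ((n : R) + 1) = algebraMap ℚ R ((n : ℚ) + 1) := by
    push_cast
    simp
  have h2 : algebraMap ℚ R ((n : ℚ) + 1) * algebraMap ℚ R ((n : ℚ) + 1)⁻¹ = 1 := by
    rw [← map_mul, mul_inv_cancel₀ (by positivity), map_one]
  calc a = a * (((n : R) + 1) * algebraMap ℚ R ((n : ℚ) + 1)⁻¹) := by
          rw [h1, h2, mul_one]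
    _ = b * (((n : R) + 1) * algebraMap ℚ R ((n : ℚ) + 1)⁻¹) := by
          rw [← mul_assoc, hab, mul_assoc]
    _ = b := by rw [h1, h2, mul_one]

lemma ode_uniq {g F G : R⟦X⟧} (hF : d⁄dX R F = g * F) (hG : d⁄dX R G = g * G)
    (h0 : constantCoeff F = constantCoeff G) : F = G := by
  ext n
  induction n using Nat.strong_induction_on with
  | _ n ih =>
    match n with
    | 0 => simpa using h0
    | Nat.succ n =>
      have hF' := congrArg (coeff n) hF
      have hG' := congrArg (coeff n) hG
      rw [coeff_derivative, coeff_mul] at hF' hG'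
      apply nat_succ_cancel n
      push_cast
      rw [hF', hG']
      apply Finset.sum_congr rfl
      intro p hp
      rw [HasAntidiagonal.mem_antidiagonal] at hp
      have : p.2 < n + 1 := by omega
      rw [ih p.2 this]


lemma derivative_pexp {f : R⟦X⟧} (hf : constantCoeff f = 0) :
    d⁄dX R (pexp f) = d⁄dX R f * pexp f := by
  ext n
  rw [coeff_derivative, coeff_pexp, Finset.sum_mul]
  have lhs_eq : ∀ j ∈ range (n + 1 + 1),
      algebraMap ℚ R (1 / j.factorial) * coeff (n + 1) (f ^ j) * ((n : R) + 1)
        = algebraMap ℚ R (1 / j.factorial) * coeff n (d⁄dX R (f ^ j)) := by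
    intro j _
    rw [coeff_derivative]
    push_cast
    ring
  rw [Finset.sum_congr rfl lhs_eq]
  have lhs_eq2 : ∀ j ∈ range (n + 1 + 1),
      algebraMap ℚ R (1 / j.factorial) * coeff n (d⁄dX R (f ^ j))
        = if j = 0 then 0 else
            algebraMap ℚ R (1 / (j-1).factorial) * coeff n (d⁄dX R f * f ^ (j-1)) := by
    intro j _
    match j with
    | 0 => simp
    | Nat.succ i =>
      rw [if_neg (Nat.succ_ne_zero i)]
      rw [Derivation.leibniz_pow]
      simp only [Nat.succ_sub_one]
      rw [smul_eq_mul, map_nsmul, nsmul_eq_mul]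
      rw [← mul_assoc]
      congr 1
      · rw [← map_natCast (algebraMap ℚ R) (i+1), ← map_mul]
        congr 1
        rw [Nat.factorial_succ]
        push_cast
        field_simp
      · rw [mul_comm]
  rw [Finset.sum_congr rfl lhs_eq2, Finset.sum_range_succ']
  simp only [if_neg (Nat.succ_ne_zero _), Nat.succ_sub_one, eq_self_iff_true, if_true, add_zero]
  rw [coeff_mul]
  have rhs_eq : ∀ p ∈ antidiagonal n,
      coeff p.1 (d⁄dX R f) * coeff p.2 (pexp f)
        = ∑ i ∈ range (n + 1), algebraMap ℚ R (1 / i.factorial)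
            * (coeff p.1 (d⁄dX R f) * coeff p.2 (f ^ i)) := by
    intro p hp
    rw [HasAntidiagonal.mem_antidiagonal] at hp
    rw [coeff_pexp, Finset.mul_sum]
    rw [Finset.sum_subset (Finset.range_subset_range.mpr (by omega : p.2 + 1 ≤ n + 1))]
    · exact Finset.sum_congr rfl fun i _ => by ring
    · intro i _ hi
      rw [Finset.mem_range, not_lt] at hi
      rw [coeff_pow_eq_zero hf (by omega), mul_zero, mul_zero]
  rw [Finset.sum_congr rfl rhs_eq, Finset.sum_comm]
  apply Finset.sum_congr rfl
  intro i _
  rw [← Finset.mul_sum, ← coeff_mul]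


lemma pexp_add {f g : R⟦X⟧} (hf : constantCoeff f = 0) (hg : constantCoeff g = 0) :
    pexp (f + g) = pexp f * pexp g := by
  apply ode_uniq (g := d⁄dX R (f + g))
  · exact derivative_pexp (by simp [map_add, hf, hg])
  · rw [Derivation.leibniz, smul_eq_mul, smul_eq_mul, derivative_pexp hf, derivative_pexp hg,
      map_add]
    ring
  · rw [constantCoeff_pexp, map_mul, constantCoeff_pexp, constantCoeff_pexp, mul_one]

lemma pexp_sum {ι : Type*} (s : Finset ι) (f : ι → R⟦X⟧)
    (hf : ∀ i ∈ s, constantCoeff (f i) = 0) :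
    pexp (∑ i ∈ s, f i) = ∏ i ∈ s, pexp (f i) := by
  classical
  induction s using Finset.induction_on with
  | empty => simp [pexp_zero]
  | insert a s hx ih =>
    rw [Finset.sum_insert hx, Finset.prod_insert hx,
      pexp_add (hf a (mem_insert_self a s)) (by
        rw [map_sum]
        exact Finset.sum_eq_zero fun i hi => hf i (mem_insert_of_mem hi)),
      ih fun i hi => hf i (mem_insert_of_mem hi)]

/-- geometric series -/
noncomputable def geo (c : R) : R⟦X⟧ := mk fun n => c ^ n

lemma geo_inv (c : R) : (1 - C c * X) * geo c = 1 := by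
  ext n
  rw [sub_mul, one_mul, map_sub]
  rcases n with _ | n
  · simp [geo, mul_assoc, coeff_zero_eq_constantCoeff]
  · rw [mul_assoc, coeff_C_mul, coeff_succ_X_mul, coeff_one, if_neg (Nat.succ_ne_zero n)]
    simp [geo, pow_succ']

noncomputable def negL (c : R) : R⟦X⟧ :=
  mk fun m => if m = 0 then 0 else -((m : ℚ)⁻¹ • c ^ m)

lemma constantCoeff_negL (c : R) : constantCoeff (negL c) = 0 := by
  rw [← coeff_zero_eq_constantCoeff]; simp [negL]

lemma derivative_negL (c : R) : d⁄dX R (negL c) = -(C c * geo c) := by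
  ext n
  rw [coeff_derivative]
  simp only [negL, coeff_mk, if_neg (Nat.succ_ne_zero n), map_neg, neg_mul]
  congr 1
  have hcast : ((n : R) + 1) = ((n + 1 : ℕ) : R) := by push_cast; ring
  rw [hcast, mul_comm, ← nsmul_eq_mul, ← Nat.cast_smul_eq_nsmul ℚ, smul_smul,
    mul_inv_cancel₀ (by positivity : ((n + 1 : ℕ) : ℚ) ≠ 0), one_smul, coeff_C_mul]
  simp [geo, pow_succ']

lemma pexp_negL (c : R) : pexp (negL c) = 1 - C c * X := by
  apply ode_uniq (g := d⁄dX R (negL c))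
  · exact derivative_pexp (constantCoeff_negL c)
  · rw [derivative_negL, Derivation.map_sub, Derivation.map_one_eq_zero, Derivation.leibniz,
      derivative_X, derivative_C, smul_zero, add_zero, smul_eq_mul, mul_one, zero_sub,
      neg_mul, neg_inj, mul_assoc, mul_comm (geo c), geo_inv, mul_one]
  · rw [constantCoeff_pexp]
    simp

noncomputable def posL (c : R) : R⟦X⟧ :=
  mk fun m => if m = 0 then 0 else (m : ℚ)⁻¹ • c ^ m

lemma constantCoeff_posL (c : R) : constantCoeff (posL c) = 0 := by
  rw [← coeff_zero_eq_constantCoeff]; simp [posL]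

lemma posL_add_negL (c : R) : posL c + negL c = 0 := by
  ext n
  simp only [posL, negL, map_add, coeff_mk, map_zero]
  split_ifs <;> simp

lemma pexp_posL (c : R) : pexp (posL c) = geo c := by
  have h1 : pexp (posL c) * pexp (negL c) = 1 := by
    rw [← pexp_add (constantCoeff_posL c) (constantCoeff_negL c), posL_add_negL, pexp_zero]
  calc pexp (posL c) = pexp (posL c) * ((1 - C c * X) * geo c) := by rw [geo_inv, mul_one]
    _ = (pexp (posL c) * pexp (negL c)) * geo c := by rw [pexp_negL]; ring
    _ = geo c := by rw [h1, one_mul]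


end PexpLemmas

namespace ChiProof

open scoped Classical

abbrev K : Type := PowerSeries ℚ

variable (h : ℕ × ℕ →₀ ℕ)

abbrev Vt := Σ p : ℕ × ℕ, Fin (h p)

/-- the finite set of all "basis vectors" -/
def Vs : Finset (Vt h) := h.support.sigma fun _ => Finset.univ

lemma mem_Vs (v : Vt h) : v ∈ Vs h := by
  rcases v with ⟨p, i⟩
  simp only [Vs, mem_sigma, Finsupp.mem_support_iff, Finset.mem_univ, and_true]
  exact i.pos.ne'

/-- the per-vector log-series -/
noncomputable def gv (v : Vt h) : PowerSeries K :=
  if Even (v.1.1 + v.1.2) then posL ((X : K) ^ v.1.1) else negL ((X : K) ^ v.1.1)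

lemma constantCoeff_gv (v : Vt h) : constantCoeff (gv h v) = 0 := by
  unfold gv; split_ifs
  · exact constantCoeff_posL _
  · exact constantCoeff_negL _

lemma chi_series_eq :
    (PowerSeries.mk fun m => if m = 0 then 0 else (m : ℚ)⁻¹ • chiPoly h m
      : PowerSeries K) = ∑ v ∈ Vs h, gv h v := by
  apply PowerSeries.ext
  intro m
  rw [coeff_mk, map_sum]
  rcases Nat.eq_zero_or_pos m with hm | hm
  · subst hm
    symm
    apply Finset.sum_eq_zero
    intro v _
    rw [coeff_zero_eq_constantCoeff]
    exact constantCoeff_gv h v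
  · rw [if_neg hm.ne', chiPoly, Finset.smul_sum, Vs, Finset.sum_sigma]
    apply Finset.sum_congr rfl
    intro p hp
    have hcoeff : ∀ i : Fin (h p), coeff m (gv h ⟨p, i⟩)
        = ((-1 : ℚ) ^ (p.1 + p.2) * (m : ℚ)⁻¹) • (X : K) ^ (m * p.1) := by
      intro i
      unfold gv
      rcases Nat.even_or_odd (p.1 + p.2) with he | ho
      · rw [if_pos he, posL, coeff_mk, if_neg hm.ne', he.neg_one_pow, one_mul,
          ← pow_mul, Nat.mul_comm p.1 m]
      · rw [if_neg (Nat.not_even_iff_odd.mpr ho), negL, coeff_mk, if_neg hm.ne',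
          ho.neg_one_pow, ← pow_mul, Nat.mul_comm p.1 m, neg_one_mul, neg_smul]
    rw [Finset.sum_congr rfl (fun i _ => hcoeff i), Finset.sum_const, card_univ,
      Fintype.card_fin]
    rw [smul_smul, ← Nat.cast_smul_eq_nsmul ℚ, smul_smul]
    congr 1
    ring

/-- the per-vector factor -/
noncomputable def Fv (v : Vt h) : PowerSeries K :=
  if Even (v.1.1 + v.1.2) then geo ((X : K) ^ v.1.1)
  else 1 - C ((X : K) ^ v.1.1) * X

lemma rhs_eq_prod :
    pexp (PowerSeries.mk fun m => if m = 0 then 0 else (m : ℚ)⁻¹ • chiPoly h m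
      : PowerSeries K) = ∏ v ∈ Vs h, Fv h v := by
  rw [chi_series_eq, pexp_sum _ _ (fun v _ => constantCoeff_gv h v)]
  apply Finset.prod_congr rfl
  intro v _
  unfold gv Fv
  split_ifs
  · exact pexp_posL _
  · exact pexp_negL _


def Sl (ℓ : Vt h →₀ ℕ) : ℕ := ∑ v ∈ Vs h, ℓ v * v.1.1
def Tl (ℓ : Vt h →₀ ℕ) : ℕ := ∑ v ∈ Vs h, ℓ v * v.1.2
def valid (ℓ : Vt h →₀ ℕ) : Prop := ∀ v : Vt h, Odd (v.1.1 + v.1.2) → ℓ v ≤ 1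

lemma coeff_Fv (v : Vt h) (k : ℕ) : coeff k (Fv h v) =
    if Odd (v.1.1 + v.1.2) ∧ 2 ≤ k then 0
    else ((-1 : ℚ) ^ ((v.1.1 + v.1.2) * k)) • (X : K) ^ (v.1.1 * k) := by
  unfold Fv
  rcases Nat.even_or_odd (v.1.1 + v.1.2) with he | ho
  · rw [if_pos he, if_neg (by simp [Nat.not_odd_iff_even.mpr he]), geo, coeff_mk,
      ← pow_mul, (he.mul_right k).neg_one_pow, one_smul]
  · rw [if_neg (Nat.not_even_iff_odd.mpr ho)]
    rw [map_sub, coeff_C_mul]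
    match k with
    | 0 => simp [if_neg]
    | 1 =>
      rw [if_neg (by simp)]
      simp [coeff_one_X, mul_one, ho.neg_one_pow]
    | (k+2) =>
      rw [if_pos ⟨ho, by omega⟩, coeff_one, coeff_X, if_neg (by omega), if_neg (by omega)]
      simp

lemma prod_coeff (ℓ : Vt h →₀ ℕ) :
    ∏ v ∈ Vs h, coeff (ℓ v) (Fv h v) =
      if valid h ℓ then ((-1 : ℚ) ^ (Sl h ℓ + Tl h ℓ)) • (X : K) ^ (Sl h ℓ) else 0 := by
  by_cases hv : valid h ℓ
  · rw [if_pos hv]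
    have : ∀ v ∈ Vs h, coeff (ℓ v) (Fv h v)
        = C ((-1 : ℚ) ^ ((v.1.1 + v.1.2) * ℓ v)) * (X : K) ^ (v.1.1 * ℓ v) := by
      intro v _
      rw [coeff_Fv, if_neg (by
        rintro ⟨hodd, h2⟩
        exact absurd (hv v hodd) (by omega)), PowerSeries.smul_eq_C_mul]
    rw [Finset.prod_congr rfl this, Finset.prod_mul_distrib, ← map_prod,
      Finset.prod_pow_eq_pow_sum, Finset.prod_pow_eq_pow_sum, ← PowerSeries.smul_eq_C_mul]
    congr 2
    · unfold Sl Tl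
      rw [← Finset.sum_add_distrib]
      exact Finset.sum_congr rfl fun v _ => by ring
    · unfold Sl
      apply Finset.sum_congr rfl
      intro v _
      ring
  · rw [if_neg hv]
    unfold valid at hv
    push_neg at hv
    obtain ⟨v, hodd, hge⟩ := hv
    apply Finset.prod_eq_zero (mem_Vs h v)
    rw [coeff_Fv, if_pos ⟨hodd, by omega⟩]


lemma wsum_eq (ℓ : Vt h →₀ ℕ) : (ℓ.sum fun v k => k • v.1) = (Sl h ℓ, Tl h ℓ) := by
  rw [Finsupp.sum_of_support_subset ℓ (fun v _ => mem_Vs h v) _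
    (fun v _ => by simp)]
  unfold Sl Tl
  rw [Prod.ext_iff]
  constructor
  · rw [Prod.fst_sum]
    exact Finset.sum_congr rfl fun v _ => by simp [smul_eq_mul]
  · rw [Prod.snd_sum]
    exact Finset.sum_congr rfl fun v _ => by simp [smul_eq_mul]

lemma ksum_eq (ℓ : Vt h →₀ ℕ) : (ℓ.sum fun _ k => k) = ∑ v ∈ Vs h, ℓ v :=
  Finsupp.sum_of_support_subset ℓ (fun v _ => mem_Vs h v) _ (fun v _ => rfl)

noncomputable def Af (n : ℕ) (e : ℕ × ℕ) : Finset (Vt h →₀ ℕ) :=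
  (finsuppAntidiag (Vs h) n).filter fun ℓ => valid h ℓ ∧ (Sl h ℓ, Tl h ℓ) = e

lemma sDim2_eq (n : ℕ) (e : ℕ × ℕ) : sDim2 h n e = (Af h n e).card := by
  rw [sDim2, ← Nat.card_eq_finsetCard]
  apply Nat.card_congr
  apply Equiv.subtypeEquivRight
  intro ℓ
  rw [Af, Finset.mem_filter, Finset.mem_finsuppAntidiag, wsum_eq, ksum_eq]
  constructor
  · rintro ⟨h1, h2, h3⟩
    exact ⟨⟨h2, fun v _ => mem_Vs h v⟩, h1, h3⟩
  · rintro ⟨⟨h2, _⟩, h1, h3⟩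
    exact ⟨h1, h2, h3⟩

noncomputable def Bb (n : ℕ) : ℕ := n * (Vs h).sup fun v => v.1.2

lemma Tl_le {n : ℕ} {ℓ : Vt h →₀ ℕ} (hl : ℓ ∈ finsuppAntidiag (Vs h) n) :
    Tl h ℓ ≤ Bb h n := by
  rw [Finset.mem_finsuppAntidiag] at hl
  calc Tl h ℓ ≤ ∑ v ∈ Vs h, ℓ v * ((Vs h).sup fun v => v.1.2) := by
        apply Finset.sum_le_sum
        intro v hv
        exact Nat.mul_le_mul_left _ (Finset.le_sup (f := fun v : Vt h => v.1.2) hv)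
    _ = Bb h n := by rw [← Finset.sum_mul, hl.1, Bb]

lemma tsum_eq_finsum (n s : ℕ) :
    (∑' t : ℕ, (-1 : ℚ) ^ (s + t) * (sDim2 h n (s, t) : ℚ)) =
      ∑ t ∈ range (Bb h n + 1), (-1 : ℚ) ^ (s + t) * (sDim2 h n (s, t) : ℚ) := by
  apply tsum_eq_sum
  intro t ht
  rw [Finset.mem_range, not_lt] at ht
  have : Af h n (s, t) = ∅ := by
    apply Finset.eq_empty_of_forall_notMem
    intro ℓ hℓ
    rw [Af, Finset.mem_filter] at hℓ
    have h1 := Tl_le h hℓ.1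
    have h2 : Tl h ℓ = t := congrArg Prod.snd hℓ.2.2
    omega
  rw [sDim2_eq, this, Finset.card_empty, Nat.cast_zero, mul_zero]

lemma combinatorial (n s : ℕ) :
    (∑ t ∈ range (Bb h n + 1), (-1 : ℚ) ^ (s + t) * (sDim2 h n (s, t) : ℚ)) =
      ∑ ℓ ∈ finsuppAntidiag (Vs h) n,
        if valid h ℓ ∧ Sl h ℓ = s then ((-1 : ℚ) ^ (Sl h ℓ + Tl h ℓ)) else 0 := by
  have step1 : ∀ t, (-1 : ℚ) ^ (s + t) * (sDim2 h n (s, t) : ℚ)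
      = ∑ ℓ ∈ finsuppAntidiag (Vs h) n,
          if valid h ℓ ∧ (Sl h ℓ, Tl h ℓ) = (s, t) then ((-1 : ℚ) ^ (s + t)) else 0 := by
    intro t
    rw [← Finset.sum_filter]
    have hAf : (finsuppAntidiag (Vs h) n).filter
        (fun ℓ => valid h ℓ ∧ (Sl h ℓ, Tl h ℓ) = (s, t)) = Af h n (s, t) := by
      rw [Af]
    rw [hAf, Finset.sum_const, nsmul_eq_mul, sDim2_eq, mul_comm]
  rw [Finset.sum_congr rfl fun t _ => step1 t, Finset.sum_comm]
  apply Finset.sum_congr rfl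
  intro ℓ hℓ
  by_cases hc : valid h ℓ ∧ Sl h ℓ = s
  · rw [if_pos hc]
    have hT : Tl h ℓ ∈ range (Bb h n + 1) := Finset.mem_range.mpr (by
      have := Tl_le h hℓ; omega)
    rw [Finset.sum_eq_single_of_mem (Tl h ℓ) hT (fun t _ htne => by
      rw [if_neg]
      rintro ⟨-, h2⟩
      rw [Prod.mk.injEq] at h2
      exact htne h2.2.symm)]
    rw [if_pos ⟨hc.1, by rw [hc.2]⟩, hc.2]
  · rw [if_neg hc]
    apply Finset.sum_eq_zero
    intro t _
    rw [if_neg]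
    rintro ⟨h1, h2⟩
    rw [Prod.mk.injEq] at h2
    exact hc ⟨h1, h2.1⟩


end ChiProof

open ChiProof in
theorem chi_y_genus_symmetric_products (h : ℕ × ℕ →₀ ℕ) :
    (PowerSeries.mk fun n => PowerSeries.mk fun s =>
        ∑' t : ℕ, (-1 : ℚ) ^ (s + t) * (sDim2 h n (s, t) : ℚ)
      : PowerSeries (PowerSeries ℚ)) =
      pexp (PowerSeries.mk fun m =>
        if m = 0 then 0 else (m : ℚ)⁻¹ • chiPoly h m) := by
  classical
  rw [ChiProof.rhs_eq_prod h]
  apply PowerSeries.ext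
  intro n
  rw [coeff_mk, PowerSeries.coeff_prod]
  apply PowerSeries.ext
  intro s
  rw [coeff_mk, ChiProof.tsum_eq_finsum h n s, ChiProof.combinatorial h n s, map_sum]
  apply Finset.sum_congr rfl
  intro ℓ hℓ
  rw [ChiProof.prod_coeff h ℓ]
  by_cases hv : ChiProof.valid h ℓ
  · rw [if_pos hv, PowerSeries.coeff_smul, PowerSeries.coeff_X_pow]
    by_cases hs : ChiProof.Sl h ℓ = s
    · rw [if_pos ⟨hv, hs⟩, if_pos hs.symm]
      simp
    · rw [if_neg (show ¬(s = ChiProof.Sl h ℓ) from fun c => hs c.symm), smul_zero,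
        if_neg (show ¬(ChiProof.valid h ℓ ∧ ChiProof.Sl h ℓ = s) from fun c => hs c.2)]
  · rw [if_neg hv, if_neg (fun c => hv c.1), map_zero]
end

section
/- Let W = ⊕_{(s,t)∈ℕ×ℕ} W_{s,t} be a bigraded vector space over a field K of characteristic zero, with every W_{s,t} finite-dimensional and all but finitely many zero. Set χ = ∑_{s,t} (-1)^{s+t} h^{s,t}(W) (the Euler number) and σ = ∑_{s,t} (-1)^t h^{s,t}(W) (the signature χ_1), and let σ_n = ∑_{s,t} (-1)^t h^{s,t}(S^n(W)) be the signature of the n-th graded symmetric power. Then in ℚ[[q]] one has ( ∑_{n≥0} σ_n q^n )^2 · (1-q^2)^{χ} · (1-q)^{σ} = (1+q)^{σ}, where powers with integer exponents χ, σ ∈ ℤ are taken in the group of units of ℚ[[q]]. (Equivalently, ∑_n sign(X^{(n)}) q^n = (1-q^2)^{-χ(X)/2} ((1+q)/(1-q))^{sign(X)/2} for a compact complex manifold X.) -/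
/-!
STATEMENT 7.  A bigraded vector space `W` over a field of characteristic zero
with finite-dimensional components, almost all zero, is recorded by its
dimension function `h : ℕ × ℕ →₀ ℕ`; `sDim2 h n e` is the dimension of the
bidegree-`e` component of the `n`-th graded symmetric power `S^n(W)`.

Set `χ = ∑_{s,t} (-1)^{s+t} h^{s,t}(W)` (the Euler number),
`σ = ∑_{s,t} (-1)^t h^{s,t}(W)` (the signature `χ_1`), and
`σ_n = ∑_{s,t} (-1)^t dim S^n(W)_{s,t}` (a finitely supported `tsum` below).

The theorem: `(∑_{n≥0} σ_n q^n)^2 · (1-q^2)^χ · (1-q)^σ = (1+q)^σ`, the integer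
powers (`χ, σ ∈ ℤ` may be negative) being taken in the group of units of
`ℚ[[q]]`; equivalently — as formalized here — the identity holds in the field
`ℚ((q))` of formal Laurent series (`LaurentSeries ℚ`), into which `ℚ[[q]]`
embeds and where `zpow` by integers is available; `q` is the image of
`PowerSeries.X`.
-/

open PowerSeries Finset

/-- The Euler number `χ = ∑_{s,t} (-1)^{s+t} h^{s,t}(W)`. -/
noncomputable def eulerNum (h : ℕ × ℕ →₀ ℕ) : ℤ :=
  ∑ p ∈ h.support, (-1) ^ (p.1 + p.2) * (h p : ℤ)

/-- The signature `σ = χ_1 = ∑_{s,t} (-1)^t h^{s,t}(W)`. -/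
noncomputable def signNum (h : ℕ × ℕ →₀ ℕ) : ℤ :=
  ∑ p ∈ h.support, (-1) ^ p.2 * (h p : ℤ)

/-! ### Auxiliary material -/

/-- The per-basis-vector factor of the signature generating series. -/
noncomputable def sigFac (p : ℕ × ℕ) : PowerSeries ℚ :=
  PowerSeries.mk fun k => if Even (p.1 + p.2) ∨ k ≤ 1 then ((-1 : ℚ) ^ p.2) ^ k else 0

lemma sign_key (a b : ℕ) : (-1 : ℚ) ^ b = (-1) ^ a * (-1) ^ (a + b) := by
  rw [← pow_add, show a + (a + b) = 2 * a + b by ring, pow_add, pow_mul]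
  norm_num

lemma sign_even {p : ℕ × ℕ} (hp : Even (p.1 + p.2)) :
    ((-1 : ℚ) ^ p.2) = (-1 : ℚ) ^ p.1 := by
  rw [sign_key p.1 p.2, hp.neg_one_pow, mul_one]

lemma sign_odd {p : ℕ × ℕ} (hp : ¬ Even (p.1 + p.2)) :
    ((-1 : ℚ) ^ p.2) = -(-1 : ℚ) ^ p.1 := by
  rw [sign_key p.1 p.2, (Nat.odd_iff.2 (Nat.not_even_iff.1 hp)).neg_one_pow]
  ring

lemma sigFac_odd (p : ℕ × ℕ) (hp : ¬ Even (p.1 + p.2)) :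
    sigFac p = 1 - PowerSeries.C ((-1 : ℚ) ^ p.1) * PowerSeries.X := by
  ext k
  simp only [sigFac, coeff_mk, map_sub, PowerSeries.coeff_one, coeff_C_mul, coeff_X]
  match k with
  | 0 => simp
  | 1 => simp [hp, sign_odd hp]
  | (k+2) => simp [hp, Nat.succ_ne_zero]

lemma sigFac_even_mul (p : ℕ × ℕ) (hp : Even (p.1 + p.2)) :
    (1 - PowerSeries.C ((-1 : ℚ) ^ p.1) * PowerSeries.X) * sigFac p = 1 := by
  have hs := sign_even hp
  have hfac : sigFac p = PowerSeries.mk fun k => ((-1 : ℚ) ^ p.1) ^ k := by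
    ext k; simp [sigFac, hp, hs]
  rw [hfac]
  ext k
  rw [sub_mul, one_mul, mul_assoc]
  match k with
  | 0 => simp
  | (k+1) =>
      simp only [map_sub, coeff_mk, coeff_C_mul, PowerSeries.coeff_succ_X_mul, coeff_mk,
        PowerSeries.coeff_one, Nat.succ_ne_zero, if_false, pow_succ]
      ring

def sigEquiv (h : ℕ × ℕ →₀ ℕ) :
    (Σ p : ℕ × ℕ, Fin (h p)) ≃ (Σ p : h.support, Fin (h p.1)) where
  toFun v := ⟨⟨v.1, Finsupp.mem_support_iff.2 (by have := v.2.isLt; omega)⟩, v.2⟩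
  invFun v := ⟨v.1.1, v.2⟩
  left_inv v := rfl
  right_inv v := rfl

set_option maxHeartbeats 1000000 in
lemma series_eq (h : ℕ × ℕ →₀ ℕ) [Fintype (Σ p : ℕ × ℕ, Fin (h p))] :
    (PowerSeries.mk fun n => ∑' p : ℕ × ℕ, (-1 : ℚ) ^ p.2 * (sDim2 h n p : ℚ))
      = ∏ v : (Σ p : ℕ × ℕ, Fin (h p)), sigFac v.1 := by
  classical
  ext n
  rw [coeff_mk, PowerSeries.coeff_prod]
  set deg : ((Σ p : ℕ × ℕ, Fin (h p)) →₀ ℕ) → ℕ × ℕ := fun m => m.sum fun v k => k • v.1 with hdeg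
  set S : Finset ((Σ p : ℕ × ℕ, Fin (h p)) →₀ ℕ) :=
    (Finset.univ.finsuppAntidiag n).filter
      (fun m => ∀ v : (Σ p : ℕ × ℕ, Fin (h p)), Odd (v.1.1 + v.1.2) → m v ≤ 1) with hS
  have hdeg2 : ∀ m : (Σ p : ℕ × ℕ, Fin (h p)) →₀ ℕ,
      (deg m).2 = ∑ v : (Σ p : ℕ × ℕ, Fin (h p)), m v * v.1.2 := by
    intro m
    show (m.sum fun (v : (Σ p : ℕ × ℕ, Fin (h p))) (k : ℕ) => k • v.1).2 = _
    rw [Finsupp.sum_fintype _ _ (fun v => by simp), Prod.snd_sum]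
    simp [smul_eq_mul]
  have hcard : ∀ p : ℕ × ℕ, (sDim2 h n p : ℚ) = ((S.filter (fun m => deg m = p)).card : ℚ) := by
    intro p
    have he : {m : (Σ p : ℕ × ℕ, Fin (h p)) →₀ ℕ //
        (∀ v : (Σ p : ℕ × ℕ, Fin (h p)), Odd (v.1.1 + v.1.2) → m v ≤ 1) ∧
          (m.sum fun _ k => k) = n ∧ (m.sum fun v k => k • v.1) = p}
        ≃ {m : (Σ p : ℕ × ℕ, Fin (h p)) →₀ ℕ // m ∈ S.filter (fun m => deg m = p)} := by
      apply Equiv.subtypeEquivRight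
      intro m
      simp only [hS, Finset.mem_filter, Finset.mem_finsuppAntidiag, hdeg]
      constructor
      · rintro ⟨h1, h2, h3⟩
        refine ⟨⟨⟨?_, by simp⟩, h1⟩, h3⟩
        rw [← h2, Finsupp.sum_fintype _ _ (fun v => rfl)]
      · rintro ⟨⟨⟨h2, -⟩, h1⟩, h3⟩
        refine ⟨h1, ?_, h3⟩
        rw [Finsupp.sum_fintype _ _ (fun v => rfl)]
        exact h2
    rw [sDim2, Nat.card_congr he, Nat.card_eq_finsetCard]
  have hlhs : (∑' p : ℕ × ℕ, (-1 : ℚ) ^ p.2 * (sDim2 h n p : ℚ))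
      = ∑ m ∈ S, (-1 : ℚ) ^ (deg m).2 := by
    rw [tsum_eq_sum (s := S.image deg) (f := fun p => (-1 : ℚ) ^ p.2 * (sDim2 h n p : ℚ))]
    · rw [← Finset.sum_fiberwise_of_maps_to (g := deg) (t := S.image deg)
        (fun m hm => Finset.mem_image_of_mem deg hm) (fun m => (-1 : ℚ) ^ (deg m).2)]
      refine Finset.sum_congr rfl fun p _ => ?_
      rw [hcard p, Finset.sum_congr rfl (fun m hm => by
        rw [(Finset.mem_filter.1 hm).2]), Finset.sum_const, nsmul_eq_mul, mul_comm]
    · intro p hp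
      rw [hcard p]
      have : S.filter (fun m => deg m = p) = ∅ := by
        rw [Finset.filter_eq_empty_iff]
        intro m hm hdm
        exact hp (Finset.mem_image.2 ⟨m, hm, hdm⟩)
      rw [this]
      simp
  rw [hlhs]
  rw [hS, Finset.sum_filter (fun m : (Σ p : ℕ × ℕ, Fin (h p)) →₀ ℕ =>
      ∀ v : (Σ p : ℕ × ℕ, Fin (h p)), Odd (v.1.1 + v.1.2) → m v ≤ 1)
    (fun m => (-1 : ℚ) ^ (deg m).2)]
  refine Finset.sum_congr rfl fun l hl => ?_
  by_cases hadm : ∀ v : (Σ p : ℕ × ℕ, Fin (h p)), Odd (v.1.1 + v.1.2) → l v ≤ 1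
  · rw [if_pos hadm]
    refine Eq.symm ?_
    have hc : ∀ v : (Σ p : ℕ × ℕ, Fin (h p)), (PowerSeries.coeff (l v)) (sigFac v.1)
        = ((-1 : ℚ) ^ v.1.2) ^ (l v) := by
      intro v
      rw [sigFac, coeff_mk, if_pos]
      rcases Nat.even_or_odd (v.1.1 + v.1.2) with he | ho
      · exact Or.inl he
      · exact Or.inr (hadm v ho)
    calc ∏ v : (Σ p : ℕ × ℕ, Fin (h p)), (PowerSeries.coeff (l v)) (sigFac v.1)
        = ∏ v : (Σ p : ℕ × ℕ, Fin (h p)), ((-1 : ℚ)) ^ (l v * v.1.2) := by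
          refine Finset.prod_congr rfl fun v _ => ?_
          rw [hc v, ← pow_mul, mul_comm]
      _ = (-1 : ℚ) ^ (∑ v : (Σ p : ℕ × ℕ, Fin (h p)), l v * v.1.2) :=
          Finset.prod_pow_eq_pow_sum _ _ _
      _ = (-1 : ℚ) ^ (deg l).2 := by rw [hdeg2]
  · rw [if_neg hadm]
    push_neg at hadm
    obtain ⟨v, hv, hlv⟩ := hadm
    refine (Finset.prod_eq_zero (Finset.mem_univ v) ?_).symm
    rw [sigFac, coeff_mk, if_neg]
    push_neg
    exact ⟨Nat.not_even_iff_odd.2 hv, by omega⟩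

/-- base in Laurent series -/
noncomputable def bL (p : ℕ × ℕ) : LaurentSeries ℚ :=
  ((1 - PowerSeries.C ((-1 : ℚ) ^ p.1) * PowerSeries.X : PowerSeries ℚ) : LaurentSeries ℚ)

lemma cast_ne_zero' {f : PowerSeries ℚ} (hf : f ≠ 0) : (f : LaurentSeries ℚ) ≠ 0 :=
  (map_ne_zero_iff _ HahnSeries.ofPowerSeries_injective).2 hf

lemma one_sub_C_mul_X_ne_zero (c : ℚ) :
    (1 - PowerSeries.C c * PowerSeries.X : PowerSeries ℚ) ≠ 0 := by
  intro hh
  have := congrArg (PowerSeries.constantCoeff) hh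
  simp at this

lemma bL_ne_zero (p : ℕ × ℕ) : bL p ≠ 0 := cast_ne_zero' (one_sub_C_mul_X_ne_zero _)

lemma zpow_prod_sum {K : Type*} [Field K] {x : K} (hx : x ≠ 0) {ι : Type*} (s : Finset ι)
    (f : ι → ℤ) : ∏ p ∈ s, x ^ f p = x ^ (∑ p ∈ s, f p) := by
  induction s using Finset.cons_induction with
  | empty => simp
  | cons a s ha ih => rw [Finset.prod_cons, Finset.sum_cons, zpow_add₀ hx, ih]

lemma sigFac_cast (p : ℕ × ℕ) :
    ((sigFac p : PowerSeries ℚ) : LaurentSeries ℚ)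
      = bL p ^ (if Even (p.1 + p.2) then (-1 : ℤ) else 1) := by
  by_cases hp : Even (p.1 + p.2)
  · rw [if_pos hp, zpow_neg_one]
    have h2 := congrArg (fun f : PowerSeries ℚ => (f : LaurentSeries ℚ)) (sigFac_even_mul p hp)
    simp only [PowerSeries.coe_mul, PowerSeries.coe_one] at h2
    exact (inv_eq_of_mul_eq_one_right h2).symm
  · rw [if_neg hp, zpow_one, sigFac_odd p hp]; rfl

lemma bL_eq (p : ℕ × ℕ) :
    bL p = if Even p.1 then (1 - ((PowerSeries.X : PowerSeries ℚ) : LaurentSeries ℚ))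
      else (1 + ((PowerSeries.X : PowerSeries ℚ) : LaurentSeries ℚ)) := by
  by_cases h1 : Even p.1
  · rw [if_pos h1]
    have : (1 - PowerSeries.C ((-1 : ℚ) ^ p.1) * PowerSeries.X : PowerSeries ℚ)
        = 1 - PowerSeries.X := by rw [h1.neg_one_pow]; simp
    rw [bL, this, PowerSeries.coe_sub, PowerSeries.coe_one]
  · rw [if_neg h1]
    have : (1 - PowerSeries.C ((-1 : ℚ) ^ p.1) * PowerSeries.X : PowerSeries ℚ)
        = 1 + PowerSeries.X := by
      rw [(Nat.odd_iff.2 (Nat.not_even_iff.1 h1)).neg_one_pow]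
      simp
    rw [bL, this, PowerSeries.coe_add, PowerSeries.coe_one]

theorem signature_generating_function_symmetric_products (h : ℕ × ℕ →₀ ℕ) :
    (((PowerSeries.mk fun n =>
          ∑' p : ℕ × ℕ, (-1 : ℚ) ^ p.2 * (sDim2 h n p : ℚ)) : PowerSeries ℚ) :
        LaurentSeries ℚ) ^ 2 *
        (1 - ((PowerSeries.X : PowerSeries ℚ) : LaurentSeries ℚ) ^ 2) ^ (eulerNum h) *
        (1 - ((PowerSeries.X : PowerSeries ℚ) : LaurentSeries ℚ)) ^ (signNum h) =
      (1 + ((PowerSeries.X : PowerSeries ℚ) : LaurentSeries ℚ)) ^ (signNum h) := by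
  classical
  letI : Fintype (Σ p : ℕ × ℕ, Fin (h p)) :=
    Fintype.ofEquiv _ (sigEquiv h).symm
  set q : LaurentSeries ℚ := ((PowerSeries.X : PowerSeries ℚ) : LaurentSeries ℚ) with hq
  have hx : (1 : LaurentSeries ℚ) - q ≠ 0 := by
    rw [hq, show (1 : LaurentSeries ℚ) - ((PowerSeries.X : PowerSeries ℚ) : LaurentSeries ℚ)
      = ((1 - PowerSeries.X : PowerSeries ℚ) : LaurentSeries ℚ) by
        rw [PowerSeries.coe_sub, PowerSeries.coe_one]]
    refine cast_ne_zero' fun hh => ?_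
    have := congrArg (PowerSeries.constantCoeff) hh
    simp at this
  have hy : (1 : LaurentSeries ℚ) + q ≠ 0 := by
    rw [hq, show (1 : LaurentSeries ℚ) + ((PowerSeries.X : PowerSeries ℚ) : LaurentSeries ℚ)
      = ((1 + PowerSeries.X : PowerSeries ℚ) : LaurentSeries ℚ) by
        rw [PowerSeries.coe_add, PowerSeries.coe_one]]
    refine cast_ne_zero' fun hh => ?_
    have := congrArg (PowerSeries.constantCoeff) hh
    simp at this
  -- the generating series as a product
  have hF : (((PowerSeries.mk fun n =>
          ∑' p : ℕ × ℕ, (-1 : ℚ) ^ p.2 * (sDim2 h n p : ℚ)) : PowerSeries ℚ) :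
        LaurentSeries ℚ)
      = (1 - q) ^ (∑ p ∈ h.support,
            (if Even p.1 then (if Even (p.1 + p.2) then (-1 : ℤ) else 1) * (h p : ℤ) else 0))
        * (1 + q) ^ (∑ p ∈ h.support,
            (if Even p.1 then 0 else (if Even (p.1 + p.2) then (-1 : ℤ) else 1) * (h p : ℤ))) := by
    rw [series_eq h]
    calc ((∏ v : (Σ p : ℕ × ℕ, Fin (h p)), sigFac v.1 : PowerSeries ℚ) : LaurentSeries ℚ)
        = ∏ v : (Σ p : ℕ × ℕ, Fin (h p)), ((sigFac v.1 : PowerSeries ℚ) : LaurentSeries ℚ) :=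
          map_prod (HahnSeries.ofPowerSeries ℤ ℚ) _ _
      _ = ∏ v : (Σ p : ℕ × ℕ, Fin (h p)),
            bL v.1 ^ (if Even (v.1.1 + v.1.2) then (-1 : ℤ) else 1) :=
          Finset.prod_congr rfl fun v _ => sigFac_cast v.1
      _ = ∏ w : (Σ p : h.support, Fin (h p.1)),
            bL w.1.1 ^ (if Even (w.1.1.1 + w.1.1.2) then (-1 : ℤ) else 1) :=
          ((sigEquiv h).symm.prod_comp
            (fun v : (Σ p : ℕ × ℕ, Fin (h p)) =>
              bL v.1 ^ (if Even (v.1.1 + v.1.2) then (-1 : ℤ) else 1))).symm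
      _ = ∏ p : h.support, ∏ _j : Fin (h p.1),
            bL p.1 ^ (if Even (p.1.1 + p.1.2) then (-1 : ℤ) else 1) := by
          rw [← Finset.univ_sigma_univ, Finset.prod_sigma]
      _ = ∏ p : h.support,
            bL p.1 ^ ((if Even (p.1.1 + p.1.2) then (-1 : ℤ) else 1) * (h p.1 : ℤ)) := by
          refine Finset.prod_congr rfl fun p _ => ?_
          rw [Finset.prod_const, Finset.card_univ, Fintype.card_fin,
            ← zpow_natCast (bL p.1 ^ _) (h p.1), ← zpow_mul]
      _ = ∏ p ∈ h.support,
            bL p ^ ((if Even (p.1 + p.2) then (-1 : ℤ) else 1) * (h p : ℤ)) :=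
          Finset.prod_coe_sort h.support
            (fun p => bL p ^ ((if Even (p.1 + p.2) then (-1 : ℤ) else 1) * (h p : ℤ)))
      _ = ∏ p ∈ h.support,
            ((1 - q) ^ (if Even p.1 then (if Even (p.1 + p.2) then (-1 : ℤ) else 1) * (h p : ℤ) else 0)
              * (1 + q) ^ (if Even p.1 then 0 else (if Even (p.1 + p.2) then (-1 : ℤ) else 1) * (h p : ℤ))) := by
          refine Finset.prod_congr rfl fun p _ => ?_
          by_cases h1 : Even p.1
          · rw [bL_eq p, if_pos h1, if_pos h1, if_pos h1, zpow_zero, mul_one, hq]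
          · rw [bL_eq p, if_neg h1, if_neg h1, if_neg h1, zpow_zero, one_mul, hq]
      _ = _ := by
          rw [Finset.prod_mul_distrib, zpow_prod_sum hx, zpow_prod_sum hy]
  rw [hF]
  have hsq : (1 : LaurentSeries ℚ) - q ^ 2 = (1 - q) * (1 + q) := by ring
  set A : ℤ := ∑ p ∈ h.support,
      (if Even p.1 then (if Even (p.1 + p.2) then (-1 : ℤ) else 1) * (h p : ℤ) else 0) with hA
  set B : ℤ := ∑ p ∈ h.support,
      (if Even p.1 then 0 else (if Even (p.1 + p.2) then (-1 : ℤ) else 1) * (h p : ℤ)) with hB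
  have E1 : A * 2 + eulerNum h + signNum h = 0 := by
    rw [hA, eulerNum, signNum, Finset.sum_mul, ← Finset.sum_add_distrib, ← Finset.sum_add_distrib]
    refine Finset.sum_eq_zero fun p _ => ?_
    rcases Nat.even_or_odd p.1 with h1 | h1 <;> rcases Nat.even_or_odd p.2 with h2 | h2
    · have hs : Even (p.1 + p.2) := h1.add h2
      rw [if_pos h1, if_pos hs, hs.neg_one_pow, h2.neg_one_pow]; ring
    · have hs : ¬ Even (p.1 + p.2) := by
        simp [Nat.even_add, h1, Nat.not_even_iff_odd.2 h2]
      rw [if_pos h1, if_neg hs,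
        (Nat.odd_iff.2 (Nat.not_even_iff.1 hs)).neg_one_pow, h2.neg_one_pow]; ring
    · have hs : ¬ Even (p.1 + p.2) := by
        simp [Nat.even_add, Nat.not_even_iff_odd.2 h1, h2]
      rw [if_neg (Nat.not_even_iff_odd.2 h1),
        (Nat.odd_iff.2 (Nat.not_even_iff.1 hs)).neg_one_pow, h2.neg_one_pow]; ring
    · have hs : Even (p.1 + p.2) := h1.add_odd h2
      rw [if_neg (Nat.not_even_iff_odd.2 h1), hs.neg_one_pow, h2.neg_one_pow]; ring
  have E2 : B * 2 + eulerNum h = signNum h := by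
    rw [hB, eulerNum, signNum, Finset.sum_mul, ← Finset.sum_add_distrib]
    refine Finset.sum_congr rfl fun p _ => ?_
    rcases Nat.even_or_odd p.1 with h1 | h1 <;> rcases Nat.even_or_odd p.2 with h2 | h2
    · have hs : Even (p.1 + p.2) := h1.add h2
      rw [if_pos h1, hs.neg_one_pow, h2.neg_one_pow]; ring
    · have hs : ¬ Even (p.1 + p.2) := by
        simp [Nat.even_add, h1, Nat.not_even_iff_odd.2 h2]
      rw [if_pos h1, (Nat.odd_iff.2 (Nat.not_even_iff.1 hs)).neg_one_pow, h2.neg_one_pow]; ring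
    · have hs : ¬ Even (p.1 + p.2) := by
        simp [Nat.even_add, Nat.not_even_iff_odd.2 h1, h2]
      rw [if_neg (Nat.not_even_iff_odd.2 h1), if_neg hs,
        (Nat.odd_iff.2 (Nat.not_even_iff.1 hs)).neg_one_pow, h2.neg_one_pow]; ring
    · have hs : Even (p.1 + p.2) := h1.add_odd h2
      rw [if_neg (Nat.not_even_iff_odd.2 h1), if_pos hs, hs.neg_one_pow, h2.neg_one_pow]
      try ring
  calc ((1 - q) ^ A * (1 + q) ^ B) ^ 2 * (1 - q ^ 2) ^ eulerNum h * (1 - q) ^ signNum h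
      = ((1 - q) ^ A) ^ (2 : ℕ) * ((1 + q) ^ B) ^ (2 : ℕ) * ((1 - q) * (1 + q)) ^ eulerNum h
          * (1 - q) ^ signNum h := by rw [hsq]; ring
    _ = (1 - q) ^ (A * 2) * (1 + q) ^ (B * 2) * ((1 - q) ^ eulerNum h * (1 + q) ^ eulerNum h)
          * (1 - q) ^ signNum h := by
        rw [← zpow_natCast ((1 - q) ^ A) 2, ← zpow_natCast ((1 + q) ^ B) 2,
          ← zpow_mul, ← zpow_mul, mul_zpow]
        norm_num
    _ = ((1 - q) ^ (A * 2) * (1 - q) ^ eulerNum h * (1 - q) ^ signNum h)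
          * ((1 + q) ^ (B * 2) * (1 + q) ^ eulerNum h) := by ring
    _ = (1 - q) ^ (A * 2 + eulerNum h + signNum h) * (1 + q) ^ (B * 2 + eulerNum h) := by
        rw [← zpow_add₀ hx, ← zpow_add₀ hx, ← zpow_add₀ hy]
    _ = (1 + q) ^ signNum h := by rw [E1, E2, zpow_zero, one_mul]
end

section
/- In the formal power series ring ℚ[[q]] one has exp( ∑_{l≥1} 2 q^{2l-1} / ( (2l-1)(1 + q^{2l-1}) ) ) = ∏_{m≥1} ( (1 + q^m)/(1 - q^m) )^{(-1)^{m+1}}. (This is the square of the identity exp(∑_{l≥1} q^{2l-1}/((2l-1)(1+q^{2l-1}))) = ∏_{m≥1}((1+q^m)/(1-q^m))^{(-1)^{m+1}/2} used in the computation of orbifold signatures of symmetric products.) -/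
/-!
STATEMENT 12.  In `ℚ[[q]]`:
`exp (∑_{l≥1} 2 q^{2l-1} / ((2l-1)(1+q^{2l-1}))) = ∏_{m≥1} ((1+q^m)/(1-q^m))^{(-1)^{m+1}}`.

The exponents `(-1)^{m+1} = ±1` are integer powers of units of `ℚ[[q]]`; the
identity is formalized in the field `ℚ((q))` of formal Laurent series
(`LaurentSeries ℚ`), where `zpow` and inverses are available, `q` being the
image of `PowerSeries.X`.  The `l`-th summand is `≡ 0 mod q^{2l-1}` and the
`m`-th factor is `≡ 1 mod q^m`, so the infinite sum and product converge
`q`-adically; they are rendered coefficientwise: the series inside `exp` is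
defined by truncating the sum at `l ≤ M` for its `q^M` coefficient (as
`2l-1 ≥ l`), and the identity is asserted for each `q^N`-coefficient with the
product truncated at `m ≤ N`.  `pexp f` is the exponential `∑_j f^j/j!` of a
power series with zero constant term, defined by the finite sums
`coeff N (pexp f) = ∑_{j≤N} coeff N (f^j)/j!`.
-/

open PowerSeries Finset

/-- `∑_{l≥1} 2 q^{2l-1}/((2l-1)(1+q^{2l-1}))`, defined coefficientwise (the `l`-th
summand is `≡ 0 mod q^{2l-1}` and `2l-1 ≥ l`, so only `l ≤ M` contribute to the
`q^M` coefficient). -/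
noncomputable def sumSeries12 : PowerSeries ℚ :=
  PowerSeries.mk fun M => PowerSeries.coeff M
    (∑ l ∈ Finset.Icc 1 M, (2 * ((2 * l - 1 : ℕ) : ℚ)⁻¹) •
      ((PowerSeries.X : PowerSeries ℚ) ^ (2 * l - 1) *
        (1 + (PowerSeries.X : PowerSeries ℚ) ^ (2 * l - 1))⁻¹))

/-- The variable `q` of `ℚ((q))`. -/
noncomputable def qL : LaurentSeries ℚ := ((PowerSeries.X : PowerSeries ℚ) : LaurentSeries ℚ)

namespace Work

/-! ### constant-coefficient facts -/

lemma cc_one_sub (e : ℕ) (he : 1 ≤ e) : constantCoeff (1 - X ^ e : PowerSeries ℚ) = 1 := by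
  simp; omega

lemma cc_one_add (e : ℕ) (he : 1 ≤ e) : constantCoeff (1 + X ^ e : PowerSeries ℚ) = 1 := by
  simp; omega

lemma ne_one_sub (e : ℕ) (he : 1 ≤ e) : constantCoeff (1 - X ^ e : PowerSeries ℚ) ≠ 0 := by
  rw [cc_one_sub e he]; norm_num

lemma ne_one_add (e : ℕ) (he : 1 ≤ e) : constantCoeff (1 + X ^ e : PowerSeries ℚ) ≠ 0 := by
  rw [cc_one_add e he]; norm_num

lemma one_sub_ne_zero (e : ℕ) (he : 1 ≤ e) : (1 - X ^ e : PowerSeries ℚ) ≠ 0 := by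
  intro h
  have := ne_one_sub e he
  rw [h] at this
  simp at this

lemma one_add_ne_zero (e : ℕ) (he : 1 ≤ e) : (1 + X ^ e : PowerSeries ℚ) ≠ 0 := by
  intro h
  have := ne_one_add e he
  rw [h] at this
  simp at this

/-! ### explicit inverses -/

noncomputable def geom (e : ℕ) : PowerSeries ℚ := PowerSeries.mk fun t => if e ∣ t then 1 else 0

lemma geom_mul (e : ℕ) (he : 1 ≤ e) : geom e * (1 - X ^ e) = 1 := by
  ext t
  rw [mul_sub, mul_one, map_sub, coeff_mul_X_pow']
  rcases Nat.eq_zero_or_pos t with rfl | ht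
  · simp [geom, Nat.not_lt.mpr he]
    omega
  · simp only [geom, coeff_mk, coeff_one, ht.ne', if_false]
    have key : ∀ _ : e ≤ t, e ∣ t - e ↔ e ∣ t := by
      intro h1
      constructor
      · intro h2
        have := Nat.dvd_add h2 (dvd_refl e)
        rwa [Nat.sub_add_cancel h1] at this
      · intro h2
        exact Nat.dvd_sub h2 dvd_rfl
    by_cases hd : e ∣ t
    · have hle : e ≤ t := Nat.le_of_dvd ht hd
      simp [hd, hle, (key hle).mpr hd]
    · by_cases hle : e ≤ t
      · have : ¬ e ∣ t - e := fun h => hd ((key hle).mp h)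
        simp [hd, hle, this]
      · simp [hd, hle]

lemma inv_one_sub (e : ℕ) (he : 1 ≤ e) : (1 - X ^ e : PowerSeries ℚ)⁻¹ = geom e := by
  rw [eq_comm, PowerSeries.eq_inv_iff_mul_eq_one (ne_one_sub e he)]
  exact geom_mul e he

noncomputable def geom2 (d : ℕ) : PowerSeries ℚ :=
  PowerSeries.mk fun t => if d ∣ t then ((-1 : ℚ) ^ (t / d) * ((t / d : ℕ) + 1 : ℚ)) else 0

lemma geom2_mul (d : ℕ) (hd : 1 ≤ d) : geom2 d * (1 + X ^ d) ^ 2 = 1 := by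
  have hd0 : d ≠ 0 := by omega
  have hrw : geom2 d * (1 + X ^ d) ^ 2
      = geom2 d + geom2 d * X ^ d + geom2 d * X ^ d + geom2 d * X ^ (2 * d) := by
    rw [pow_two, two_mul, pow_add]; ring
  rw [hrw]
  ext t
  simp only [map_add, coeff_mul_X_pow', geom2, coeff_mk, coeff_one]
  by_cases hdvd : d ∣ t
  · obtain ⟨k, rfl⟩ := hdvd
    have hk : d * k / d = k := Nat.mul_div_cancel_left k (by omega)
    match k with
    | 0 => simp [Nat.not_lt.mpr hd, hd0]
    | 1 =>
      have h1 : d ≤ d * 1 := by omega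
      have h2 : ¬ (2 * d ≤ d * 1) := by omega
      have h3 : d * 1 - d = 0 := by omega
      simp [h1, h2, h3, hk, hd0, mul_one, Nat.div_self (by omega : 0 < d)]
      intro h _
      exact absurd h (by omega)
    | (k + 2) =>
      have h1 : d ≤ d * (k + 2) := by nlinarith
      have h2 : 2 * d ≤ d * (k + 2) := by nlinarith
      have h3 : d * (k + 2) - d = d * (k + 1) := by ring_nf; omega
      have h4 : d * (k + 2) - 2 * d = d * k := by ring_nf; omega
      have h5 : d * (k + 2) ≠ 0 := by positivity
      have hk1 : d * (k + 1) / d = k + 1 := Nat.mul_div_cancel_left _ (by omega)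
      have hk0 : d * k / d = k := Nat.mul_div_cancel_left _ (by omega)
      simp [h1, h2, h3, h4, h5, hk, hk1, hk0, dvd_mul_right]
      ring
  · have h0 : t ≠ 0 := by rintro rfl; exact hdvd (dvd_zero d)
    have hB : d ≤ t → ¬ d ∣ t - d := by
      intro h1 h2
      apply hdvd
      have := Nat.dvd_add h2 (dvd_refl d)
      rwa [Nat.sub_add_cancel h1] at this
    have hC : 2 * d ≤ t → ¬ d ∣ t - 2 * d := by
      intro h1 h2
      apply hdvd
      have := Nat.dvd_add h2 (dvd_mul_left d 2)
      rwa [Nat.sub_add_cancel h1] at this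
    simp only [hdvd, if_false, h0]
    split_ifs <;> simp_all

/-! ### the factors of the product and their properties -/

noncomputable def Gf (m : ℕ) : PowerSeries ℚ :=
  if Even m then (1 - X ^ m) * (1 + X ^ m)⁻¹ else (1 + X ^ m) * (1 - X ^ m)⁻¹

noncomputable def hfun (m : ℕ) : PowerSeries ℚ :=
  ((-1 : ℚ) ^ (m + 1) * (2 * m)) • (X ^ (m - 1) * geom (2 * m))

noncomputable def Pprod : PowerSeries ℚ :=
  PowerSeries.mk fun N => PowerSeries.coeff N (∏ m ∈ Finset.Icc 1 N, Gf m)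

noncomputable def Sl (l : ℕ) : PowerSeries ℚ :=
  (2 * ((2 * l - 1 : ℕ) : ℚ)⁻¹) • ((X : PowerSeries ℚ) ^ (2 * l - 1) *
    (1 + (X : PowerSeries ℚ) ^ (2 * l - 1))⁻¹)

lemma sumSeries12_eq : sumSeries12 = PowerSeries.mk fun M =>
    PowerSeries.coeff M (∑ l ∈ Finset.Icc 1 M, Sl l) := rfl

lemma X_pow_dvd_Gf_sub_one (m : ℕ) (hm : 1 ≤ m) : (X : PowerSeries ℚ) ^ m ∣ Gf m - 1 := by
  rcases Nat.even_or_odd m with he | ho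
  · have h1 : (1 + X ^ m : PowerSeries ℚ) * (1 + X ^ m)⁻¹ = 1 :=
      PowerSeries.mul_inv_cancel _ (ne_one_add m hm)
    have : Gf m - 1 = X ^ m * (-2 * (1 + X ^ m)⁻¹) := by
      rw [Gf, if_pos he]
      linear_combination h1
    rw [this]
    exact dvd_mul_right _ _
  · have h1 : (1 - X ^ m : PowerSeries ℚ) * (1 - X ^ m)⁻¹ = 1 :=
      PowerSeries.mul_inv_cancel _ (ne_one_sub m hm)
    have : Gf m - 1 = X ^ m * (2 * (1 - X ^ m)⁻¹) := by
      rw [Gf, if_neg (Nat.not_even_iff_odd.mpr ho)]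
      linear_combination h1
    rw [this]
    exact dvd_mul_right _ _

lemma X_pow_dvd_prod_sub_one (s : Finset ℕ) (f : ℕ → PowerSeries ℚ) (t : ℕ)
    (h : ∀ m ∈ s, (X : PowerSeries ℚ) ^ t ∣ f m - 1) :
    (X : PowerSeries ℚ) ^ t ∣ (∏ m ∈ s, f m) - 1 := by
  classical
  induction s using Finset.induction with
  | empty => simp
  | @insert a s' hx ih =>
    rw [Finset.prod_insert hx]
    have h1 := h a (Finset.mem_insert_self a s')
    have h2 := ih fun m hm => h m (Finset.mem_insert_of_mem hm)
    have : f a * ∏ m ∈ s', f m - 1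
        = f a * ((∏ m ∈ s', f m) - 1) + (f a - 1) := by ring
    rw [this]
    exact dvd_add (Dvd.dvd.mul_left h2 _) h1

lemma Icc_one_eq_Ioc (K : ℕ) : Finset.Icc 1 K = Finset.Ioc 0 K := by
  ext x; simp; omega

lemma coeff_eq_of_sub_dvd (t : ℕ) {F G : PowerSeries ℚ}
    (h : (X : PowerSeries ℚ) ^ (t + 1) ∣ F - G) :
    PowerSeries.coeff t F = PowerSeries.coeff t G := by
  have := PowerSeries.X_pow_dvd_iff.mp h t (by omega)
  rw [map_sub, sub_eq_zero] at this
  exact this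

lemma coeff_Pprod (t K : ℕ) (h : t ≤ K) :
    PowerSeries.coeff t Pprod = PowerSeries.coeff t (∏ m ∈ Finset.Icc 1 K, Gf m) := by
  rw [Pprod, coeff_mk]
  apply coeff_eq_of_sub_dvd
  have hsplit : (∏ m ∈ Finset.Icc 1 K, Gf m)
      = (∏ m ∈ Finset.Icc 1 t, Gf m) * ∏ m ∈ Finset.Ioc t K, Gf m := by
    rw [Icc_one_eq_Ioc, Icc_one_eq_Ioc, ← Finset.prod_Ioc_consecutive _ (Nat.zero_le t) h]
  rw [hsplit]
  rw [dvd_sub_comm]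
  have hdvd : (X : PowerSeries ℚ) ^ (t + 1) ∣ (∏ m ∈ Finset.Ioc t K, Gf m) - 1 := by
    apply X_pow_dvd_prod_sub_one
    intro m hm
    rw [Finset.mem_Ioc] at hm
    exact dvd_trans (pow_dvd_pow _ (by omega)) (X_pow_dvd_Gf_sub_one m (by omega))
  have : (∏ m ∈ Finset.Icc 1 t, Gf m) * (∏ m ∈ Finset.Ioc t K, Gf m)
      - (∏ m ∈ Finset.Icc 1 t, Gf m)
      = (∏ m ∈ Finset.Icc 1 t, Gf m) * ((∏ m ∈ Finset.Ioc t K, Gf m) - 1) := by ring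
  rw [this]
  exact Dvd.dvd.mul_left hdvd _

lemma X_pow_dvd_Sl (l : ℕ) (hl : 1 ≤ l) : (X : PowerSeries ℚ) ^ l ∣ Sl l := by
  rw [Sl, PowerSeries.smul_eq_C_mul]
  apply Dvd.dvd.mul_left
  apply Dvd.dvd.mul_right
  exact pow_dvd_pow _ (by omega)

lemma coeff_S (t K : ℕ) (h : t ≤ K) :
    PowerSeries.coeff t sumSeries12 = PowerSeries.coeff t (∑ l ∈ Finset.Icc 1 K, Sl l) := by
  rw [sumSeries12_eq, coeff_mk]
  apply coeff_eq_of_sub_dvd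
  have hsplit : (∑ l ∈ Finset.Icc 1 K, Sl l)
      = (∑ l ∈ Finset.Icc 1 t, Sl l) + ∑ l ∈ Finset.Ioc t K, Sl l := by
    rw [Icc_one_eq_Ioc, Icc_one_eq_Ioc, ← Finset.sum_Ioc_consecutive _ (Nat.zero_le t) h]
  rw [hsplit]
  rw [dvd_sub_comm]
  have : (∑ l ∈ Finset.Icc 1 t, Sl l) + (∑ l ∈ Finset.Ioc t K, Sl l)
      - (∑ l ∈ Finset.Icc 1 t, Sl l) = ∑ l ∈ Finset.Ioc t K, Sl l := by ring
  rw [this]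
  apply Finset.dvd_sum
  intro l hl
  rw [Finset.mem_Ioc] at hl
  exact dvd_trans (pow_dvd_pow _ (by omega)) (X_pow_dvd_Sl l (by omega))


/-! ### pexp -/

lemma coeff_pow_eq_zero {f : PowerSeries ℚ} (hf : constantCoeff f = 0) {t j : ℕ} (h : t < j) :
    PowerSeries.coeff t (f ^ j) = 0 := by
  have : (X : PowerSeries ℚ) ^ j ∣ f ^ j :=
    pow_dvd_pow_of_dvd (PowerSeries.X_dvd_iff.mpr hf) j
  exact PowerSeries.X_pow_dvd_iff.mp this t h

lemma coeff_pexp {f : PowerSeries ℚ} (hf : constantCoeff f = 0) (t K : ℕ) (h : t ≤ K) :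
    PowerSeries.coeff t (pexp f) =
      ∑ j ∈ Finset.range (K + 1), (j.factorial : ℚ)⁻¹ * PowerSeries.coeff t (f ^ j) := by
  rw [pexp, coeff_mk]
  have hsub : Finset.range (t + 1) ⊆ Finset.range (K + 1) :=
    Finset.range_subset_range.mpr (by omega)
  rw [Finset.sum_subset hsub]
  · apply Finset.sum_congr rfl
    intro j _
    simp [one_div]
  · intro j _ hj
    rw [Finset.mem_range, not_lt] at hj
    rw [coeff_pow_eq_zero hf (by omega)]
    simp

lemma constantCoeff_pexp {f : PowerSeries ℚ} (hf : constantCoeff f = 0) :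
    constantCoeff (pexp f) = 1 := by
  have := coeff_pexp hf 0 0 le_rfl
  rw [← PowerSeries.coeff_zero_eq_constantCoeff_apply, this]
  simp

lemma X_pow_dvd_of_coeff_eq (k : ℕ) {F G : PowerSeries ℚ}
    (h : ∀ t < k, PowerSeries.coeff t F = PowerSeries.coeff t G) :
    (X : PowerSeries ℚ) ^ k ∣ F - G := by
  rw [PowerSeries.X_pow_dvd_iff]
  intro t ht
  rw [map_sub, sub_eq_zero]
  exact h t ht

lemma derivative_pexp {f : PowerSeries ℚ} (hf : constantCoeff f = 0) :
    d⁄dX ℚ (pexp f) = d⁄dX ℚ f * pexp f := by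
  ext t
  set K := t + 2 with hK
  set E : PowerSeries ℚ := ∑ j ∈ Finset.range (K + 1), (j.factorial : ℚ)⁻¹ • f ^ j with hE
  have coeffE : ∀ u ≤ K, PowerSeries.coeff u E = PowerSeries.coeff u (pexp f) := by
    intro u hu
    rw [coeff_pexp hf u K hu, hE, map_sum]
    apply Finset.sum_congr rfl
    intro j _
    rw [PowerSeries.coeff_smul, smul_eq_mul]
  set E' : PowerSeries ℚ := ∑ j ∈ Finset.range K, (j.factorial : ℚ)⁻¹ • f ^ j with hE'
  have coeffE' : ∀ u ≤ t + 1, PowerSeries.coeff u E' = PowerSeries.coeff u (pexp f) := by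
    intro u hu
    rw [coeff_pexp hf u (t + 1) hu, hE', map_sum]
    apply Finset.sum_congr rfl
    intro j _
    rw [PowerSeries.coeff_smul, smul_eq_mul]
  -- derivative of E
  have hdE : d⁄dX ℚ E = E' * d⁄dX ℚ f := by
    rw [hE, map_sum, Finset.sum_range_succ']
    have hzero : (d⁄dX ℚ) ((Nat.factorial 0 : ℚ)⁻¹ • (f ^ 0)) = 0 := by
      simp
    rw [hzero, add_zero, hE', Finset.sum_mul]
    apply Finset.sum_congr rfl
    intro i _
    rw [Derivation.map_smul, Derivation.leibniz_pow]
    have h1 : ((i + 1 : ℕ) • f ^ (i + 1 - 1) • (d⁄dX ℚ) f)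
        = ((i + 1 : ℚ)) • (f ^ i * (d⁄dX ℚ) f) := by
      rw [Nat.add_sub_cancel, smul_eq_mul]
      norm_cast
    rw [h1, smul_smul, smul_mul_assoc]
    congr 1
    rw [Nat.factorial_succ]
    have h2 : ((i.factorial : ℚ)) ≠ 0 := Nat.cast_ne_zero.mpr i.factorial_ne_zero
    push_cast
    field_simp
  -- assemble
  have step1 : PowerSeries.coeff t (d⁄dX ℚ (pexp f)) = PowerSeries.coeff t (d⁄dX ℚ E) := by
    rw [PowerSeries.coeff_derivative, PowerSeries.coeff_derivative, coeffE (t + 1) (by omega)]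
  have step2 : PowerSeries.coeff t (E' * d⁄dX ℚ f)
      = PowerSeries.coeff t (d⁄dX ℚ f * pexp f) := by
    have hdvd : (X : PowerSeries ℚ) ^ (t + 2) ∣ E' - pexp f :=
      X_pow_dvd_of_coeff_eq _ (fun u hu => coeffE' u (by omega))
    have key : (X : PowerSeries ℚ) ^ (t + 2) ∣ E' * d⁄dX ℚ f - d⁄dX ℚ f * pexp f := by
      have : E' * d⁄dX ℚ f - d⁄dX ℚ f * pexp f = d⁄dX ℚ f * (E' - pexp f) := by ring
      rw [this]
      exact Dvd.dvd.mul_left hdvd _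
    have := PowerSeries.X_pow_dvd_iff.mp key t (by omega)
    rw [map_sub, sub_eq_zero] at this
    exact this
  rw [step1, hdE, step2]


/-! ### uniqueness for the ODE f' = g·f -/

lemma ode_unique {A B : PowerSeries ℚ} (hA : constantCoeff A = 1)
    (hB : constantCoeff B = 1)
    (h : d⁄dX ℚ A * B = d⁄dX ℚ B * A) : A = B := by
  ext n
  induction n using Nat.strong_induction_on with
  | _ n ih =>
    match n with
    | 0 => simp [PowerSeries.coeff_zero_eq_constantCoeff, hA, hB]
    | (n + 1) =>
      have hc := congrArg (PowerSeries.coeff n) h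
      rw [PowerSeries.coeff_mul, PowerSeries.coeff_mul] at hc
      have hc' : ∑ p ∈ Finset.HasAntidiagonal.antidiagonal n,
          (PowerSeries.coeff (p.1 + 1) A * (p.1 + 1) * PowerSeries.coeff p.2 B
           - PowerSeries.coeff (p.1 + 1) B * (p.1 + 1) * PowerSeries.coeff p.2 A) = 0 := by
        rw [Finset.sum_sub_distrib]
        rw [sub_eq_zero]
        calc ∑ p ∈ Finset.HasAntidiagonal.antidiagonal n,
              PowerSeries.coeff (p.1 + 1) A * (p.1 + 1) * PowerSeries.coeff p.2 B
            = ∑ p ∈ Finset.HasAntidiagonal.antidiagonal n,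
              PowerSeries.coeff p.1 (d⁄dX ℚ A) * PowerSeries.coeff p.2 B := by
              apply Finset.sum_congr rfl; intro p _
              rw [PowerSeries.coeff_derivative]
          _ = ∑ p ∈ Finset.HasAntidiagonal.antidiagonal n,
              PowerSeries.coeff p.1 (d⁄dX ℚ B) * PowerSeries.coeff p.2 A := hc
          _ = ∑ p ∈ Finset.HasAntidiagonal.antidiagonal n,
              PowerSeries.coeff (p.1 + 1) B * (p.1 + 1) * PowerSeries.coeff p.2 A := by
              apply Finset.sum_congr rfl; intro p _
              rw [PowerSeries.coeff_derivative]
      have hmem : ((n, 0) : ℕ × ℕ) ∈ Finset.HasAntidiagonal.antidiagonal n := by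
        simp
      have hsingle := Finset.sum_eq_single_of_mem ((n, 0) : ℕ × ℕ) hmem
        (f := fun p => PowerSeries.coeff (p.1 + 1) A * (p.1 + 1) * PowerSeries.coeff p.2 B
           - PowerSeries.coeff (p.1 + 1) B * (p.1 + 1) * PowerSeries.coeff p.2 A)
        (by
          intro p hp hne
          have hsum : p.1 + p.2 = n := Finset.HasAntidiagonal.mem_antidiagonal.mp hp
          have h1 : p.1 < n := by
            rcases Nat.lt_or_ge p.1 n with h' | h'
            · exact h'
            · exfalso
              apply hne
              have : p.1 = n := by omega
              have : p.2 = 0 := by omega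
              exact Prod.ext (by omega) this
          have e1 : PowerSeries.coeff (p.1 + 1) A = PowerSeries.coeff (p.1 + 1) B :=
            ih (p.1 + 1) (by omega)
          have e2 : PowerSeries.coeff p.2 A = PowerSeries.coeff p.2 B :=
            ih p.2 (by omega)
          rw [e1, e2]
          ring)
      rw [hc'] at hsingle
      simp only [PowerSeries.coeff_zero_eq_constantCoeff, hA, hB, mul_one] at hsingle
      have hne : ((n : ℚ) + 1) ≠ 0 := by positivity
      have hkey : (PowerSeries.coeff (n + 1) A - PowerSeries.coeff (n + 1) B)
          * ((n : ℚ) + 1) = 0 := by linear_combination -hsingle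
      exact sub_eq_zero.mp ((mul_eq_zero.mp hkey).resolve_right hne)


/-! ### logarithmic derivatives of the factors -/

lemma dX_pow (m : ℕ) :
    d⁄dX ℚ ((X : PowerSeries ℚ) ^ m) = PowerSeries.C (m : ℚ) * X ^ (m - 1) := by
  rw [Derivation.leibniz_pow, PowerSeries.derivative_X, smul_eq_mul, mul_one,
    ← Nat.cast_smul_eq_nsmul ℚ, PowerSeries.smul_eq_C_mul]

lemma d_one_sub (m : ℕ) :
    d⁄dX ℚ ((1 : PowerSeries ℚ) - X ^ m) = -(PowerSeries.C (m : ℚ) * X ^ (m - 1)) := by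
  rw [map_sub, dX_pow]
  simp

lemma d_one_add (m : ℕ) :
    d⁄dX ℚ ((1 : PowerSeries ℚ) + X ^ m) = PowerSeries.C (m : ℚ) * X ^ (m - 1) := by
  rw [map_add, dX_pow]
  simp

lemma dGf (m : ℕ) (hm : 1 ≤ m) : d⁄dX ℚ (Gf m) = hfun m * Gf m := by
  have h2 : geom (2 * m) * (1 - X ^ m * X ^ m) = 1 := by
    have := geom_mul (2 * m) (by omega)
    rwa [show (X : PowerSeries ℚ) ^ (2 * m) = X ^ m * X ^ m by rw [two_mul, pow_add]] at this
  rcases Nat.even_or_odd m with he | ho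
  · -- even : Gf m = (1 - X^m) * (1 + X^m)⁻¹
    have h1e : (1 + X ^ m : PowerSeries ℚ) * (1 + X ^ m)⁻¹ = 1 :=
      PowerSeries.mul_inv_cancel _ (ne_one_add m hm)
    have hsc : PowerSeries.C ((-1 : ℚ) ^ (m + 1) * (2 * m)) =
        -(2 * PowerSeries.C (m : ℚ)) := by
      rw [(he.add_one).neg_one_pow, neg_one_mul, map_neg, map_mul, map_ofNat]
    simp only [Gf, if_pos he, hfun]
    rw [PowerSeries.smul_eq_C_mul, hsc, Derivation.leibniz, smul_eq_mul, smul_eq_mul, PowerSeries.derivative_inv',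
      d_one_add, d_one_sub]
    linear_combination (-(PowerSeries.C (m : ℚ) * X ^ (m - 1))) *
      ((2 * (1 + X ^ m)⁻¹ * geom (2 * m) * (1 - X ^ m) - (1 + X ^ m)⁻¹) * h1e
        - 2 * ((1 + X ^ m)⁻¹) ^ 2 * h2)
  · -- odd : Gf m = (1 + X^m) * (1 - X^m)⁻¹
    have h1 : (1 - X ^ m : PowerSeries ℚ) * (1 - X ^ m)⁻¹ = 1 :=
      PowerSeries.mul_inv_cancel _ (ne_one_sub m hm)
    have hsc : PowerSeries.C ((-1 : ℚ) ^ (m + 1) * (2 * m)) =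
        2 * PowerSeries.C (m : ℚ) := by
      rw [(ho.add_one).neg_one_pow, one_mul, map_mul, map_ofNat]
    simp only [Gf, if_neg (Nat.not_even_iff_odd.mpr ho), hfun]
    rw [PowerSeries.smul_eq_C_mul, hsc, Derivation.leibniz, smul_eq_mul, smul_eq_mul, PowerSeries.derivative_inv',
      d_one_add, d_one_sub]
    linear_combination (PowerSeries.C (m : ℚ) * X ^ (m - 1)) *
      ((2 * (1 - X ^ m)⁻¹ * geom (2 * m) * (1 + X ^ m) - (1 - X ^ m)⁻¹) * h1
        - 2 * ((1 - X ^ m)⁻¹) ^ 2 * h2)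

lemma dSl (l : ℕ) (hl : 1 ≤ l) :
    d⁄dX ℚ (Sl l) =
      PowerSeries.C 2 * (X ^ (2 * l - 1 - 1) * geom2 (2 * l - 1)) := by
  set d : ℕ := 2 * l - 1 with hd
  have hd1 : 1 ≤ d := by omega
  have h1e : (1 + X ^ d : PowerSeries ℚ) * (1 + X ^ d)⁻¹ = 1 :=
    PowerSeries.mul_inv_cancel _ (ne_one_add d hd1)
  have hg : geom2 d * (1 + X ^ d) ^ 2 = 1 := geom2_mul d hd1
  have hC : PowerSeries.C (2 * ((d : ℕ) : ℚ)⁻¹) * PowerSeries.C (d : ℚ)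
      = PowerSeries.C 2 := by
    rw [← map_mul]
    congr 1
    have : ((d : ℕ) : ℚ) ≠ 0 := Nat.cast_ne_zero.mpr (by omega)
    field_simp
  rw [Sl, ← hd, Derivation.map_smul, PowerSeries.smul_eq_C_mul]
  rw [Derivation.leibniz, smul_eq_mul, smul_eq_mul, PowerSeries.derivative_inv',
    d_one_add, dX_pow]
  linear_combination (X ^ (d - 1) * ((1 + X ^ d)⁻¹ - X ^ d * ((1 + X ^ d)⁻¹) ^ 2)) * hC
    + (PowerSeries.C 2 * X ^ (d - 1)) *
      ((geom2 d + geom2 d * (1 + X ^ d) * (1 + X ^ d)⁻¹ - (1 + X ^ d)⁻¹) * h1e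
        - ((1 + X ^ d)⁻¹) ^ 2 * hg)

lemma dProd (K : ℕ) :
    d⁄dX ℚ (∏ m ∈ Finset.Icc 1 K, Gf m)
      = (∑ m ∈ Finset.Icc 1 K, hfun m) * ∏ m ∈ Finset.Icc 1 K, Gf m := by
  induction K with
  | zero => simp
  | succ K ih =>
    rw [Finset.prod_Icc_succ_top (by omega : 1 ≤ K + 1),
      Finset.sum_Icc_succ_top (by omega : 1 ≤ K + 1)]
    rw [Derivation.leibniz, smul_eq_mul, smul_eq_mul, ih, dGf (K + 1) (by omega)]
    ring


/-! ### the divisor-pairing identity -/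

lemma crux (K n' : ℕ) (h1 : 1 ≤ n') (h2 : n' ≤ K) :
    ∑ l ∈ Finset.Icc 1 K,
        (if (2 * l - 1) ∣ n' then
          2 * ((-1 : ℚ) ^ (n' / (2 * l - 1) - 1) * ((n' / (2 * l - 1) : ℕ) : ℚ)) else 0)
      = ∑ m ∈ Finset.Icc 1 K,
        (if m ∣ n' ∧ Odd (n' / m) then ((-1 : ℚ) ^ (m + 1) * (2 * (m : ℚ))) else 0) := by
  have hn0 : n' ≠ 0 := by omega
  have hset : (Finset.Icc 1 K).filter (· ∣ n') = n'.divisors := by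
    ext m
    simp only [Finset.mem_filter, Finset.mem_Icc, Nat.mem_divisors]
    constructor
    · rintro ⟨_, hm⟩; exact ⟨hm, hn0⟩
    · rintro ⟨hm, -⟩
      have hm1 : 1 ≤ m := Nat.pos_of_dvd_of_pos hm (by omega)
      have hm2 : m ≤ n' := Nat.le_of_dvd (by omega) hm
      exact ⟨⟨hm1, by omega⟩, hm⟩
  -- RHS as a sum over divisors
  have hR : ∑ m ∈ Finset.Icc 1 K,
        (if m ∣ n' ∧ Odd (n' / m) then ((-1 : ℚ) ^ (m + 1) * (2 * (m : ℚ))) else 0)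
      = ∑ m ∈ n'.divisors,
        (if Odd (n' / m) then ((-1 : ℚ) ^ (m + 1) * (2 * (m : ℚ))) else 0) := by
    rw [← hset, Finset.sum_filter]
    apply Finset.sum_congr rfl
    intro m _
    by_cases hdvd : m ∣ n' <;> by_cases hodd : Odd (n' / m) <;> simp [hdvd, hodd]
  -- LHS as a sum over odd divisors
  have hL : ∑ l ∈ Finset.Icc 1 K,
        (if (2 * l - 1) ∣ n' then
          2 * ((-1 : ℚ) ^ (n' / (2 * l - 1) - 1) * ((n' / (2 * l - 1) : ℕ) : ℚ)) else 0)
      = ∑ d ∈ n'.divisors,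
        (if Odd d then 2 * ((-1 : ℚ) ^ (n' / d - 1) * ((n' / d : ℕ) : ℚ)) else 0) := by
    rw [← Finset.sum_filter, ← Finset.sum_filter]
    apply Finset.sum_bij (fun l _ => 2 * l - 1)
    · intro l hl
      simp only [Finset.mem_filter, Finset.mem_Icc] at hl
      simp only [Finset.mem_filter, Nat.mem_divisors]
      refine ⟨⟨hl.2, hn0⟩, ?_⟩
      have : 2 * l - 1 = 2 * (l - 1) + 1 := by omega
      rw [this]
      exact odd_two_mul_add_one _
    · intro a ha b hb hab
      simp only [Finset.mem_filter, Finset.mem_Icc] at ha hb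
      omega
    · intro d hd
      simp only [Finset.mem_filter, Nat.mem_divisors] at hd
      obtain ⟨⟨hdvd, -⟩, hodd⟩ := hd
      obtain ⟨k, hk⟩ := hodd
      refine ⟨k + 1, ?_, by omega⟩
      simp only [Finset.mem_filter, Finset.mem_Icc]
      have hd1 : d ≤ n' := Nat.le_of_dvd (by omega) hdvd
      constructor
      · constructor
        · omega
        · omega
      · have : 2 * (k + 1) - 1 = d := by omega
        rw [this]
        exact hdvd
    · intro l hl
      rfl
  rw [hL, hR]
  -- divisor pairing
  have key : ∀ d ∈ n'.divisors,
      (if Odd d then 2 * ((-1 : ℚ) ^ (n' / d - 1) * ((n' / d : ℕ) : ℚ)) else 0)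
        = (fun m => if Odd (n' / m) then ((-1 : ℚ) ^ (m + 1) * (2 * (m : ℚ))) else 0)
            (n' / d) := by
    intro d hd
    rw [Nat.mem_divisors] at hd
    have hdd : n' / (n' / d) = d := Nat.div_div_self hd.1 hn0
    simp only [hdd]
    by_cases hodd : Odd d
    · rw [if_pos hodd, if_pos hodd]
      have he1 : 1 ≤ n' / d := Nat.one_le_div_iff (Nat.pos_of_dvd_of_pos hd.1 (by omega))
        |>.mpr (Nat.le_of_dvd (by omega) hd.1)
      have hpow : (-1 : ℚ) ^ (n' / d - 1) = (-1 : ℚ) ^ (n' / d + 1) := by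
        have : n' / d + 1 = (n' / d - 1) + 2 := by omega
        rw [this, pow_add]
        norm_num
      rw [hpow]
      ring
    · rw [if_neg hodd, if_neg hodd]
  rw [Finset.sum_congr rfl key]
  simpa using Nat.sum_div_divisors n'
    (fun m => if Odd (n' / m) then ((-1 : ℚ) ^ (m + 1) * (2 * (m : ℚ))) else 0)


/-! ### coefficients of hfun and of d⁄dX (Sl l) -/

lemma coeff_hfun (m u : ℕ) (hm : 1 ≤ m) :
    PowerSeries.coeff u (hfun m) =
      if m ∣ (u + 1) ∧ Odd ((u + 1) / m) then ((-1 : ℚ) ^ (m + 1) * (2 * (m : ℚ))) else 0 := by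
  rw [hfun, PowerSeries.coeff_smul, smul_eq_mul, PowerSeries.coeff_X_pow_mul']
  have equiv : (m - 1 ≤ u ∧ 2 * m ∣ u - (m - 1)) ↔ (m ∣ (u + 1) ∧ Odd ((u + 1) / m)) := by
    constructor
    · rintro ⟨hle, j, hj⟩
      have hmul : m * (2 * j + 1) = 2 * m * j + m := by ring
      have hu : u + 1 = m * (2 * j + 1) := by omega
      have hq : (u + 1) / m = 2 * j + 1 := by
        rw [hu]; exact Nat.mul_div_cancel_left _ (by omega)
      exact ⟨⟨2 * j + 1, hu⟩, by rw [hq]; exact odd_two_mul_add_one j⟩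
    · rintro ⟨⟨e, he⟩, hodd⟩
      have hq : (u + 1) / m = e := by
        rw [he]; exact Nat.mul_div_cancel_left _ (by omega)
      rw [hq] at hodd
      obtain ⟨j, hj⟩ := hodd
      have hmul : m * (2 * j + 1) = 2 * m * j + m := by ring
      rw [hj] at he
      exact ⟨by omega, ⟨j, by omega⟩⟩
  by_cases h : m ∣ (u + 1) ∧ Odd ((u + 1) / m)
  · obtain ⟨hle, hdvd⟩ := equiv.mpr h
    rw [if_pos h, if_pos hle, geom, coeff_mk, if_pos hdvd, mul_one]
  · rw [if_neg h]
    by_cases hle : m - 1 ≤ u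
    · rw [if_pos hle, geom, coeff_mk, if_neg (fun hdvd => h (equiv.mp ⟨hle, hdvd⟩)), mul_zero]
    · rw [if_neg hle, mul_zero]

lemma coeff_dSl (l u : ℕ) (hl : 1 ≤ l) :
    PowerSeries.coeff u (d⁄dX ℚ (Sl l)) =
      if (2 * l - 1) ∣ (u + 1) then
        2 * ((-1 : ℚ) ^ ((u + 1) / (2 * l - 1) - 1) * (((u + 1) / (2 * l - 1) : ℕ) : ℚ))
      else 0 := by
  rw [dSl l hl]
  set d : ℕ := 2 * l - 1 with hd
  have hd1 : 1 ≤ d := by omega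
  rw [PowerSeries.coeff_C_mul, PowerSeries.coeff_X_pow_mul']
  by_cases h : d ∣ (u + 1)
  · obtain ⟨e, he⟩ := h
    have he1 : 1 ≤ e := by
      rcases Nat.eq_zero_or_pos e with rfl | h'
      · omega
      · exact h'
    obtain ⟨e', rfl⟩ : ∃ e', e = e' + 1 := ⟨e - 1, by omega⟩
    have hmul : d * (e' + 1) = d * e' + d := by ring
    have hle : d - 1 ≤ u := by omega
    have hsub : u - (d - 1) = d * e' := by omega
    have hdvd : d ∣ u - (d - 1) := ⟨e', hsub⟩
    have hq1 : (u - (d - 1)) / d = e' := by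
      rw [hsub]; exact Nat.mul_div_cancel_left _ (by omega)
    have hq2 : (u + 1) / d = e' + 1 := by
      rw [he]; exact Nat.mul_div_cancel_left _ (by omega)
    have hdu : d ∣ u + 1 := ⟨e' + 1, he⟩
    rw [if_pos hdu, if_pos hle, geom2, coeff_mk, if_pos hdvd, hq1, hq2]
    push_cast
    ring
  · rw [if_neg h]
    by_cases hle : d - 1 ≤ u
    · rw [if_pos hle, geom2, coeff_mk, if_neg, mul_zero]
      rintro ⟨e', hsub⟩
      apply h
      have hmul : d * (e' + 1) = d * e' + d := by ring
      exact ⟨e' + 1, by omega⟩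
    · rw [if_neg hle, mul_zero]

/-! ### the differential equation for Pprod -/

lemma dPprod_eq : d⁄dX ℚ Pprod = d⁄dX ℚ sumSeries12 * Pprod := by
  ext t
  set K : ℕ := t + 1 with hK
  have e1 : PowerSeries.coeff t (d⁄dX ℚ Pprod)
      = PowerSeries.coeff t (d⁄dX ℚ (∏ m ∈ Finset.Icc 1 K, Gf m)) := by
    rw [PowerSeries.coeff_derivative, PowerSeries.coeff_derivative,
      coeff_Pprod (t + 1) K le_rfl]
  have e3 : PowerSeries.coeff t (d⁄dX ℚ sumSeries12 * Pprod)
      = PowerSeries.coeff t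
          ((∑ m ∈ Finset.Icc 1 K, hfun m) * ∏ m ∈ Finset.Icc 1 K, Gf m) := by
    rw [PowerSeries.coeff_mul, PowerSeries.coeff_mul]
    apply Finset.sum_congr rfl
    intro p hp
    have hsum : p.1 + p.2 = t := Finset.HasAntidiagonal.mem_antidiagonal.mp hp
    have c1 : PowerSeries.coeff p.1 (d⁄dX ℚ sumSeries12)
        = PowerSeries.coeff p.1 (d⁄dX ℚ (∑ l ∈ Finset.Icc 1 K, Sl l)) := by
      rw [PowerSeries.coeff_derivative, PowerSeries.coeff_derivative,
        coeff_S (p.1 + 1) K (by omega)]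
    have c2 : PowerSeries.coeff p.1 (d⁄dX ℚ (∑ l ∈ Finset.Icc 1 K, Sl l))
        = ∑ l ∈ Finset.Icc 1 K, PowerSeries.coeff p.1 (d⁄dX ℚ (Sl l)) := by
      rw [map_sum, map_sum]
    have c3 : ∑ l ∈ Finset.Icc 1 K, PowerSeries.coeff p.1 (d⁄dX ℚ (Sl l))
        = ∑ m ∈ Finset.Icc 1 K, PowerSeries.coeff p.1 (hfun m) := by
      calc ∑ l ∈ Finset.Icc 1 K, PowerSeries.coeff p.1 (d⁄dX ℚ (Sl l))
          = ∑ l ∈ Finset.Icc 1 K,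
            (if (2 * l - 1) ∣ (p.1 + 1) then
              2 * ((-1 : ℚ) ^ ((p.1 + 1) / (2 * l - 1) - 1) *
                (((p.1 + 1) / (2 * l - 1) : ℕ) : ℚ)) else 0) := by
            apply Finset.sum_congr rfl
            intro l hl
            exact coeff_dSl l p.1 (Finset.mem_Icc.mp hl).1
        _ = ∑ m ∈ Finset.Icc 1 K,
            (if m ∣ (p.1 + 1) ∧ Odd ((p.1 + 1) / m) then
              ((-1 : ℚ) ^ (m + 1) * (2 * (m : ℚ))) else 0) :=
            crux K (p.1 + 1) (by omega) (by omega)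
        _ = ∑ m ∈ Finset.Icc 1 K, PowerSeries.coeff p.1 (hfun m) := by
            apply Finset.sum_congr rfl
            intro m hm
            exact (coeff_hfun m p.1 (Finset.mem_Icc.mp hm).1).symm
    have c5 : PowerSeries.coeff p.2 Pprod
        = PowerSeries.coeff p.2 (∏ m ∈ Finset.Icc 1 K, Gf m) :=
      coeff_Pprod p.2 K (by omega)
    rw [c1, c2, c3, c5, ← map_sum]
  rw [e1, e3, dProd]

lemma ccS : constantCoeff sumSeries12 = 0 := by
  rw [← PowerSeries.coeff_zero_eq_constantCoeff_apply, sumSeries12_eq, coeff_mk]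
  simp

lemma ccP : constantCoeff Pprod = 1 := by
  rw [← PowerSeries.coeff_zero_eq_constantCoeff_apply, Pprod, coeff_mk]
  simp

theorem pexp_eq_Pprod : pexp sumSeries12 = Pprod := by
  apply ode_unique (constantCoeff_pexp ccS) ccP
  rw [derivative_pexp ccS, dPprod_eq]
  ring

end Work


open Work LaurentSeries HahnSeries in
theorem exp_sum_eq_prod_one_add_div_one_sub_alternating (N : ℕ) :
    ((pexp sumSeries12 : PowerSeries ℚ) : LaurentSeries ℚ).coeff (N : ℤ) =
      (∏ m ∈ Finset.Icc 1 N,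
        ((1 + qL ^ m) * (1 - qL ^ m)⁻¹) ^ ((-1 : ℤ) ^ (m + 1))).coeff (N : ℤ) := by
  have hinv : ∀ f : PowerSeries ℚ, constantCoeff f ≠ 0 →
      ((f⁻¹ : PowerSeries ℚ) : LaurentSeries ℚ) = ((f : PowerSeries ℚ) : LaurentSeries ℚ)⁻¹ := by
    intro f hf
    have h := PowerSeries.mul_inv_cancel f hf
    have h2 : ((f : PowerSeries ℚ) : LaurentSeries ℚ)
        * ((f⁻¹ : PowerSeries ℚ) : LaurentSeries ℚ) = 1 := by
      rw [← PowerSeries.coe_mul, h, PowerSeries.coe_one]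
    exact eq_inv_of_mul_eq_one_left (by rwa [mul_comm] at h2)
  have hq : ∀ m : ℕ, ((X ^ m : PowerSeries ℚ) : LaurentSeries ℚ) = qL ^ m := by
    intro m
    rw [PowerSeries.coe_pow, qL]
  have hadd : ∀ m : ℕ, ((1 + X ^ m : PowerSeries ℚ) : LaurentSeries ℚ) = 1 + qL ^ m := by
    intro m
    rw [PowerSeries.coe_add, PowerSeries.coe_one, hq]
  have hsub : ∀ m : ℕ, ((1 - X ^ m : PowerSeries ℚ) : LaurentSeries ℚ) = 1 - qL ^ m := by
    intro m
    rw [PowerSeries.coe_sub, PowerSeries.coe_one, hq]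
  have hfac : ∀ m ∈ Finset.Icc 1 N,
      ((1 + qL ^ m) * (1 - qL ^ m)⁻¹) ^ ((-1 : ℤ) ^ (m + 1))
        = ((Gf m : PowerSeries ℚ) : LaurentSeries ℚ) := by
    intro m hm
    have hm1 : 1 ≤ m := (Finset.mem_Icc.mp hm).1
    rcases Nat.even_or_odd m with he | ho
    · have hexp : (-1 : ℤ) ^ (m + 1) = -1 := (he.add_one).neg_one_pow
      have hGe : ((Gf m : PowerSeries ℚ) : LaurentSeries ℚ)
          = (1 - qL ^ m) * (1 + qL ^ m)⁻¹ := by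
        rw [Gf, if_pos he, PowerSeries.coe_mul, hinv _ (ne_one_add m hm1), hadd, hsub]
      rw [hexp, zpow_neg_one, hGe, mul_inv_rev, inv_inv, mul_comm]
    · have hexp : (-1 : ℤ) ^ (m + 1) = 1 := (ho.add_one).neg_one_pow
      have hGo : ((Gf m : PowerSeries ℚ) : LaurentSeries ℚ)
          = (1 + qL ^ m) * (1 - qL ^ m)⁻¹ := by
        rw [Gf, if_neg (Nat.not_even_iff_odd.mpr ho), PowerSeries.coe_mul,
          hinv _ (ne_one_sub m hm1), hadd, hsub]
      rw [hexp, zpow_one, hGo]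
  have hprod : (∏ m ∈ Finset.Icc 1 N,
        ((1 + qL ^ m) * (1 - qL ^ m)⁻¹) ^ ((-1 : ℤ) ^ (m + 1)))
      = (((∏ m ∈ Finset.Icc 1 N, Gf m : PowerSeries ℚ)) : LaurentSeries ℚ) := by
    rw [Finset.prod_congr rfl hfac]
    exact (map_prod (HahnSeries.ofPowerSeries ℤ ℚ) Gf (Finset.Icc 1 N)).symm
  rw [hprod, PowerSeries.coeff_coe, PowerSeries.coeff_coe]
  simp only [Int.natAbs_natCast]
  rw [if_neg ((Int.natCast_nonneg N).not_gt), if_neg ((Int.natCast_nonneg N).not_gt)]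
  rw [pexp_eq_Pprod]
  exact coeff_Pprod N N le_rfl
end

section
/- Let c ∈ ℚ. Then in ℚ[[q]] one has ∑_{n≥0} q^n ( ∑_N ∏_{l≥1} (1/N_l!) (c/l)^{N_l} ) = exp( c ∑_{m≥1} q^m/m ), where the inner sum is over all finitely supported functions N : {1,2,3,…} → ℕ with ∑_l l·N_l = n. In particular, for c ∈ ℕ the right-hand side equals (1-q)^{-c}. (This is Zagier's computation of the generating function ∑_n χ(X^{(n)}) q^n = (1-q)^{-χ(X)} for Euler numbers of symmetric products, via χ(X^{(n)}) = ∑_{∑ lN_l = n} χ(X)^{∑ N_l} / ∏ (N_l! l^{N_l}).) -/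
/-!
STATEMENT 15.  Let `c : ℚ`.  Then in `ℚ[[q]]`:
`∑_{n≥0} q^n (∑_N ∏_{l≥1} (1/N_l!) (c/l)^{N_l}) = exp (c ∑_{m≥1} q^m/m)`,
where the inner sum runs over all finitely supported `N : {1,2,…} → ℕ` with
`∑_l l·N_l = n` — modelled as `N : ℕ →₀ ℕ` with `N 0 = 0` — and all but
finitely many factors of the product equal `1`, so it is taken over the
support of `N`; the inner sum is finite and written as a `tsum`.  The series
`c ∑_{m≥1} q^m/m` has `q^m`-coefficient `c/m` for `m ≥ 1` and zero constant
term, and `pexp f = ∑_j f^j/j!` is the exponential of a power series with zero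
constant term, given by the finite sums
`coeff n (pexp f) = ∑_{j≤n} coeff n (f^j)/j!`.

In particular, for `c = d ∈ ℕ` the right-hand side equals `(1-q)^{-d}`,
i.e. `exp (c ∑_{m≥1} q^m/m) · (1-q)^d = 1`.
-/

open PowerSeries Finset

namespace Euler15

/-- factor -/
noncomputable def hh (c : ℚ) (l k : ℕ) : ℚ := ((k.factorial : ℚ))⁻¹ * (c / l) ^ k

lemma hh_zero (c : ℚ) (l : ℕ) : hh c l 0 = 1 := by simp [hh]

/-- weight -/
noncomputable def ww (c : ℚ) (N : ℕ →₀ ℕ) : ℚ := N.prod (hh c)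

lemma ww_eq_prod (c : ℚ) (N : ℕ →₀ ℕ) {s : Finset ℕ} (hs : N.support ⊆ s) :
    ww c N = ∏ l ∈ s, hh c l (N l) :=
  Finsupp.prod_of_support_subset N hs _ (fun i _ => hh_zero c i)

lemma bound {N : ℕ →₀ ℕ} {n : ℕ} (h0 : N 0 = 0) (hs : (N.sum fun l k => l * k) = n)
    {l : ℕ} (hl : l ∈ N.support) : 1 ≤ l ∧ l ≤ n ∧ N l ≤ n := by
  have hl0 : l ≠ 0 := by
    rintro rfl
    exact (Finsupp.mem_support_iff.1 hl) h0
  have hNl : 1 ≤ N l := Nat.one_le_iff_ne_zero.2 (Finsupp.mem_support_iff.1 hl)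
  have key : l * N l ≤ n := by
    rw [← hs]
    exact Finset.single_le_sum (f := fun l => l * N l) (fun i _ => Nat.zero_le _) hl
  refine ⟨Nat.one_le_iff_ne_zero.2 hl0, ?_, ?_⟩
  · calc l = l * 1 := (mul_one l).symm
      _ ≤ l * N l := Nat.mul_le_mul_left l hNl
      _ ≤ n := key
  · calc N l = 1 * N l := (one_mul _).symm
      _ ≤ l * N l := Nat.mul_le_mul_right (N l) (Nat.one_le_iff_ne_zero.2 hl0)
      _ ≤ n := key

noncomputable def SS (n : ℕ) : Finset (ℕ →₀ ℕ) :=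
  ((Finset.range (n+1)).finsupp (fun _ => Finset.range (n+1))).filter
    (fun N => N 0 = 0 ∧ (N.sum fun l k => l * k) = n)

lemma mem_SS {n : ℕ} {N : ℕ →₀ ℕ} :
    N ∈ SS n ↔ (N 0 = 0 ∧ (N.sum fun l k => l * k) = n) := by
  constructor
  · intro h
    exact (Finset.mem_filter.1 h).2
  · intro h
    refine Finset.mem_filter.2 ⟨Finset.mem_finsupp_iff.2 ⟨?_, ?_⟩, h⟩
    · intro l hl
      exact Finset.mem_range.2 (Nat.lt_succ_of_le (bound h.1 h.2 hl).2.1)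
    · intro i _
      by_cases hi : i ∈ N.support
      · exact Finset.mem_range.2 (Nat.lt_succ_of_le (bound h.1 h.2 hi).2.2)
      · rw [Finsupp.notMem_support_iff.1 hi]
        exact Finset.mem_range.2 (Nat.succ_pos n)

lemma tsum_eq_sum_SS (c : ℚ) (n : ℕ) :
    (∑' N : {N : ℕ →₀ ℕ // N 0 = 0 ∧ (N.sum fun l k => l * k) = n},
        (∏ l ∈ N.1.support, ((N.1 l).factorial : ℚ)⁻¹ * (c / l) ^ (N.1 l)))
      = ∑ N ∈ SS n, ww c N := by
  have h1 : ∀ N : ℕ →₀ ℕ, (∏ l ∈ N.support, ((N l).factorial : ℚ)⁻¹ * (c / l) ^ (N l))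
      = ww c N := fun N => rfl
  rw [← Finset.tsum_subtype (SS n) (ww c)]
  rw [← (Equiv.subtypeEquivRight (fun N => (mem_SS (n := n) (N := N)).symm)).tsum_eq
    (fun x : {N : ℕ →₀ ℕ // N ∈ SS n} => ww c x.1)]
  exact tsum_congr fun N => h1 N.1


lemma hh_step (c : ℚ) {l : ℕ} (hl : 1 ≤ l) (k : ℕ) :
    hh c l (k+1) * ((l : ℚ) * ((k : ℚ) + 1)) = c * hh c l k := by
  have hl0 : (l : ℚ) ≠ 0 := Nat.cast_ne_zero.2 (by omega)
  have hk0 : ((k : ℚ) + 1) ≠ 0 := by positivity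
  have hf : (k.factorial : ℚ) ≠ 0 := Nat.cast_ne_zero.2 k.factorial_ne_zero
  simp only [hh, Nat.factorial_succ, Nat.cast_mul, pow_succ, mul_inv, Nat.cast_add,
    Nat.cast_one]
  field_simp

lemma ww_step (c : ℚ) {l : ℕ} (hl : 1 ≤ l) (N' : ℕ →₀ ℕ) :
    ww c (N' + Finsupp.single l 1) * ((l : ℚ) * ((N' l : ℚ) + 1)) = c * ww c N' := by
  classical
  set T : Finset ℕ := insert l (N'.support ∪ (N' + Finsupp.single l 1).support) with hT
  have hlT : l ∈ T := Finset.mem_insert_self _ _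
  have h1 : N'.support ⊆ T := fun x hx =>
    Finset.mem_insert_of_mem (Finset.mem_union_left _ hx)
  have h2 : (N' + Finsupp.single l 1).support ⊆ T := fun x hx =>
    Finset.mem_insert_of_mem (Finset.mem_union_right _ hx)
  rw [ww_eq_prod c _ h2, ww_eq_prod c N' h1]
  have e1 : ∏ x ∈ T, hh c x (((N' + Finsupp.single l 1 : ℕ →₀ ℕ) x))
      = hh c l (((N' + Finsupp.single l 1 : ℕ →₀ ℕ) l))
        * ∏ x ∈ T.erase l, hh c x (((N' + Finsupp.single l 1 : ℕ →₀ ℕ) x)) :=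
    (Finset.mul_prod_erase T _ hlT).symm
  have e2 : ∏ x ∈ T, hh c x (N' x) = hh c l (N' l) * ∏ x ∈ T.erase l, hh c x (N' x) :=
    (Finset.mul_prod_erase T _ hlT).symm
  rw [e1, e2]
  have hsame : ∀ i ∈ T.erase l, hh c i ((N' + Finsupp.single l 1 : ℕ →₀ ℕ) i) = hh c i (N' i) := by
    intro i hi
    have : i ≠ l := Finset.ne_of_mem_erase hi
    simp [Finsupp.single_apply, Ne.symm this]
  rw [Finset.prod_congr rfl hsame]
  have hval : (N' + Finsupp.single l 1 : ℕ →₀ ℕ) l = N' l + 1 := by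
    simp
  rw [hval]
  have := hh_step c hl (N' l)
  calc (hh c l (N' l + 1) * ∏ x ∈ T.erase l, hh c x (N' x)) * ((l:ℚ) * ((N' l : ℚ) + 1))
      = (hh c l (N' l + 1) * ((l:ℚ) * ((N' l : ℚ) + 1))) * ∏ x ∈ T.erase l, hh c x (N' x) := by
        ring
    _ = (c * hh c l (N' l)) * ∏ x ∈ T.erase l, hh c x (N' x) := by rw [this]
    _ = c * (hh c l (N' l) * ∏ x ∈ T.erase l, hh c x (N' x)) := by ring

noncomputable def aa (c : ℚ) (n : ℕ) : ℚ := ∑ N ∈ SS n, ww c N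

lemma SS_zero : SS 0 = {0} := by
  ext N
  rw [mem_SS, Finset.mem_singleton]
  constructor
  · rintro ⟨h0, hs⟩
    ext l
    by_contra h
    have hl : l ∈ N.support := Finsupp.mem_support_iff.2 (by simpa using h)
    have := (bound h0 hs hl).1
    have := (bound h0 hs hl).2.1
    omega
  · rintro rfl
    exact ⟨rfl, rfl⟩

lemma aa_zero (c : ℚ) : aa c 0 = 1 := by
  rw [aa, SS_zero, Finset.sum_singleton, ww, Finsupp.prod_zero_index]

lemma aa_rec (c : ℚ) (n : ℕ) :
    ((n : ℚ) + 1) * aa c (n+1) = c * ∑ k ∈ Finset.range (n+1), aa c k := by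
  classical
  -- RHS reindex
  have hR : ∑ k ∈ Finset.range (n+1), aa c k = ∑ l ∈ Finset.Icc 1 (n+1), aa c (n+1-l) := by
    refine Finset.sum_bij' (fun k _ => n+1-k) (fun l _ => n+1-l) ?_ ?_ ?_ ?_ ?_
    · intro k hk
      rw [Finset.mem_range] at hk
      show n + 1 - k ∈ Finset.Icc 1 (n+1)
      rw [Finset.mem_Icc]
      omega
    · intro l hl
      rw [Finset.mem_Icc] at hl
      show n + 1 - l ∈ Finset.range (n+1)
      rw [Finset.mem_range]
      omega
    · intro k hk
      rw [Finset.mem_range] at hk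
      show n + 1 - (n + 1 - k) = k
      omega
    · intro l hl
      rw [Finset.mem_Icc] at hl
      show n + 1 - (n + 1 - l) = l
      omega
    · intro k hk
      rw [Finset.mem_range] at hk
      show aa c k = aa c (n + 1 - (n + 1 - k))
      congr 1
      omega
  -- LHS: expand (n+1) as the sum of l * N l
  have hL : ∀ N ∈ SS (n+1), ((n:ℚ)+1) * ww c N
      = ∑ l ∈ N.support, ((l : ℚ) * (N l : ℚ)) * ww c N := by
    intro N hN
    obtain ⟨h0, hs⟩ := mem_SS.1 hN
    have hc : ((n:ℚ)+1) = ∑ l ∈ N.support, ((l : ℚ) * (N l : ℚ)) := by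
      have h2 := congrArg (fun m : ℕ => (m : ℚ)) hs
      simp only [Finsupp.sum] at h2
      push_cast at h2
      rw [h2]
    rw [hc, Finset.sum_mul]
  rw [hR]
  have e1 : ((n:ℚ)+1) * aa c (n+1)
      = ∑ x ∈ (SS (n+1)).sigma (fun N => N.support),
          ((x.2 : ℚ) * (x.1 x.2 : ℚ)) * ww c x.1 := by
    rw [← Finset.sum_sigma' (SS (n+1)) (fun N => N.support)
      (fun N l => ((l : ℚ) * (N l : ℚ)) * ww c N)]
    rw [aa, Finset.mul_sum]
    exact Finset.sum_congr rfl hL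
  have e2 : c * ∑ l ∈ Finset.Icc 1 (n+1), aa c (n+1-l)
      = ∑ x ∈ (Finset.Icc 1 (n+1)).sigma (fun l => SS (n+1-l)), c * ww c x.2 := by
    rw [← Finset.sum_sigma' (Finset.Icc 1 (n+1)) (fun l => SS (n+1-l))
      (fun l N => c * ww c N), Finset.mul_sum]
    refine Finset.sum_congr rfl fun l _ => ?_
    rw [aa, Finset.mul_sum]
  rw [e1, e2]
  refine Finset.sum_bij' (fun x _ => (⟨x.2, x.1 - Finsupp.single x.2 1⟩ : Σ _ : ℕ, ℕ →₀ ℕ))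
    (fun y _ => (⟨y.2 + Finsupp.single y.1 1, y.1⟩ : Σ N : ℕ →₀ ℕ, ℕ)) ?_ ?_ ?_ ?_ ?_
  · rintro ⟨N, l⟩ hx
    rw [Finset.mem_sigma] at hx
    dsimp only at hx ⊢
    obtain ⟨hN, hl⟩ := hx
    obtain ⟨h0, hs⟩ := mem_SS.1 hN
    obtain ⟨hl1, hl2, -⟩ := bound h0 hs hl
    have hNl : 1 ≤ N l := Nat.one_le_iff_ne_zero.2 (Finsupp.mem_support_iff.1 hl)
    have hle : Finsupp.single l 1 ≤ N := Finsupp.single_le_iff.2 hNl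
    have hNe : N - Finsupp.single l 1 + Finsupp.single l 1 = N := tsub_add_cancel_of_le hle
    rw [Finset.mem_sigma]
    constructor
    · exact Finset.mem_Icc.2 ⟨hl1, hl2⟩
    · rw [mem_SS]
      constructor
      · rw [Finsupp.tsub_apply, h0]
        simp
      · have hsum : ((N - Finsupp.single l 1).sum fun a k => a * k) + l = n + 1 := by
          have h2 : ((N - Finsupp.single l 1) + Finsupp.single l 1).sum (fun a k => a * k)
              = N.sum (fun a k => a * k) := by rw [hNe]
          rwa [Finsupp.sum_add_index' (fun a => Nat.mul_zero a)
            (fun a b₁ b₂ => Nat.mul_add a b₁ b₂),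
            Finsupp.sum_single_index (Nat.mul_zero l), Nat.mul_one, hs] at h2
        dsimp only
        omega
  · rintro ⟨l, N'⟩ hy
    rw [Finset.mem_sigma] at hy
    dsimp only at hy ⊢
    obtain ⟨hl, hN'⟩ := hy
    rw [Finset.mem_Icc] at hl
    obtain ⟨h0, hs⟩ := mem_SS.1 hN'
    rw [Finset.mem_sigma]
    constructor
    · rw [mem_SS]
      constructor
      · rw [Finsupp.add_apply, h0, Finsupp.single_apply, if_neg (by omega), add_zero]
      · rw [Finsupp.sum_add_index' (fun a => Nat.mul_zero a)
          (fun a b₁ b₂ => Nat.mul_add a b₁ b₂),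
          Finsupp.sum_single_index (Nat.mul_zero l), Nat.mul_one, hs]
        omega
    · rw [Finsupp.mem_support_iff, Finsupp.add_apply, Finsupp.single_apply, if_pos rfl]
      omega
  · rintro ⟨N, l⟩ hx
    rw [Finset.mem_sigma] at hx
    dsimp only at hx ⊢
    obtain ⟨hN, hl⟩ := hx
    have hNl : 1 ≤ N l := Nat.one_le_iff_ne_zero.2 (Finsupp.mem_support_iff.1 hl)
    have hle : Finsupp.single l 1 ≤ N := Finsupp.single_le_iff.2 hNl
    have hNe : N - Finsupp.single l 1 + Finsupp.single l 1 = N := tsub_add_cancel_of_le hle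
    show (⟨N - Finsupp.single l 1 + Finsupp.single l 1, l⟩ : Σ N : ℕ →₀ ℕ, ℕ) = ⟨N, l⟩
    rw [hNe]
  · rintro ⟨l, N'⟩ _
    show (⟨l, N' + Finsupp.single l 1 - Finsupp.single l 1⟩ : Σ _ : ℕ, ℕ →₀ ℕ) = ⟨l, N'⟩
    rw [add_tsub_cancel_right]
  · rintro ⟨N, l⟩ hx
    rw [Finset.mem_sigma] at hx
    dsimp only at hx ⊢
    obtain ⟨hN, hl⟩ := hx
    obtain ⟨h0, hs⟩ := mem_SS.1 hN
    obtain ⟨hl1, -, -⟩ := bound h0 hs hl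
    have hNl : 1 ≤ N l := Nat.one_le_iff_ne_zero.2 (Finsupp.mem_support_iff.1 hl)
    have hle : Finsupp.single l 1 ≤ N := Finsupp.single_le_iff.2 hNl
    set N' := N - Finsupp.single l 1 with hN'
    have hNe : N' + Finsupp.single l 1 = N := tsub_add_cancel_of_le hle
    have hval : N l = N' l + 1 := by
      rw [← hNe, Finsupp.add_apply, Finsupp.single_apply, if_pos rfl]
    show ((l : ℚ) * (N l : ℚ)) * ww c N = c * ww c N'
    have hws := ww_step c hl1 N'
    rw [hNe] at hws
    rw [← hws, hval]
    push_cast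
    ring

lemma coeff_pexp (g : ℚ⟦X⟧) (n : ℕ) :
    coeff n (pexp g) = ∑ j ∈ Finset.range (n + 1),
      ((j.factorial : ℚ))⁻¹ * coeff n (g ^ j) := by
  simp [pexp, coeff_mk, one_div, Algebra.algebraMap_self]

lemma coeff_pow_eq_zero {g : ℚ⟦X⟧} (hg : constantCoeff g = 0) {i j : ℕ} (h : i < j) :
    coeff i (g ^ j) = 0 := by
  have hX : (X : ℚ⟦X⟧) ∣ g := X_dvd_iff.2 hg
  exact X_pow_dvd_iff.1 (pow_dvd_pow_of_dvd hX j) i h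

lemma coeff_pexp_ext {g : ℚ⟦X⟧} (hg : constantCoeff g = 0) {n m : ℕ} (hm : n < m) :
    coeff n (pexp g) = ∑ j ∈ Finset.range m,
      ((j.factorial : ℚ))⁻¹ * coeff n (g ^ j) := by
  rw [coeff_pexp]
  refine Finset.sum_subset (by rw [Finset.range_subset_range]; omega) ?_
  intro j hj hj'
  rw [Finset.mem_range] at hj hj'
  rw [coeff_pow_eq_zero hg (by omega), mul_zero]

lemma pexp_deriv {g : ℚ⟦X⟧} (hg : constantCoeff g = 0) :
    d⁄dX ℚ (pexp g) = d⁄dX ℚ g * pexp g := by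
  ext n
  rw [coeff_derivative]
  rw [coeff_pexp g (n+1)]
  rw [Finset.sum_mul]
  have hterm : ∀ j ∈ Finset.range (n + 2), ((j.factorial : ℚ))⁻¹ * coeff (n+1) (g ^ j)
      * ((n : ℚ) + 1) = ((j.factorial : ℚ))⁻¹ * ((j : ℚ) * coeff n (g ^ (j-1) * d⁄dX ℚ g)) := by
    intro j _
    have hD : coeff (n+1) (g ^ j) * ((n : ℚ) + 1) = coeff n (d⁄dX ℚ (g ^ j)) := by
      rw [coeff_derivative]
    rw [mul_assoc, hD, Derivation.leibniz_pow]
    simp only [smul_eq_mul, map_nsmul, nsmul_eq_mul]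
    rw [← map_natCast C j, coeff_C_mul]
  rw [Finset.sum_congr rfl hterm]
  -- peel off j = 0
  rw [Finset.sum_range_succ']
  simp only [Nat.factorial_zero, Nat.cast_one, inv_one, Nat.cast_zero, zero_mul, mul_zero,
    add_zero, Nat.add_sub_cancel]
  have hterm2 : ∀ i ∈ Finset.range (n+1),
      (((i+1).factorial : ℚ))⁻¹ * (((i+1 : ℕ) : ℚ) * coeff n (g ^ i * d⁄dX ℚ g))
      = ((i.factorial : ℚ))⁻¹ * coeff n (d⁄dX ℚ g * g ^ i) := by
    intro i _
    have h1 : ((i+1).factorial : ℚ) = ((i:ℚ)+1) * (i.factorial : ℚ) := by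
      rw [Nat.factorial_succ]
      push_cast
      ring
    have h2 : ((i:ℚ)+1) ≠ 0 := by positivity
    have h3 : (i.factorial : ℚ) ≠ 0 := Nat.cast_ne_zero.2 i.factorial_ne_zero
    rw [h1, mul_comm (g ^ i)]
    push_cast
    field_simp
  rw [Finset.sum_congr rfl hterm2]
  -- RHS
  rw [coeff_mul]
  have hterm3 : ∀ p ∈ antidiagonal n,
      coeff p.1 (d⁄dX ℚ g) * coeff p.2 (pexp g)
      = ∑ j ∈ Finset.range (n+1), ((j.factorial : ℚ))⁻¹
          * (coeff p.1 (d⁄dX ℚ g) * coeff p.2 (g ^ j)) := by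
    intro p hp
    have hp2 : p.2 < n + 1 := by
      have := Finset.HasAntidiagonal.antidiagonal.snd_le hp
      omega
    rw [coeff_pexp_ext hg hp2, Finset.mul_sum]
    exact Finset.sum_congr rfl fun j _ => by ring
  rw [Finset.sum_congr rfl hterm3, Finset.sum_comm]
  refine Finset.sum_congr rfl fun j _ => ?_
  rw [← Finset.mul_sum, coeff_mul (φ := d⁄dX ℚ g) (ψ := g ^ j)]

noncomputable def ff (c : ℚ) : ℚ⟦X⟧ := PowerSeries.mk fun m => if m = 0 then 0 else c / m

lemma constantCoeff_ff (c : ℚ) : constantCoeff (ff c) = 0 := by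
  rw [← coeff_zero_eq_constantCoeff_apply, ff, coeff_mk, if_pos rfl]

lemma coeff_D_ff (c : ℚ) (n : ℕ) : coeff n (d⁄dX ℚ (ff c)) = c := by
  rw [coeff_derivative, ff, coeff_mk, if_neg (Nat.succ_ne_zero n)]
  have : ((n : ℚ) + 1) ≠ 0 := by positivity
  push_cast
  field_simp

lemma constantCoeff_pexp {g : ℚ⟦X⟧} (hg : constantCoeff g = 0) :
    constantCoeff (pexp g) = 1 := by
  rw [← coeff_zero_eq_constantCoeff_apply, coeff_pexp]
  simp

noncomputable def bb (c : ℚ) (n : ℕ) : ℚ := coeff n (pexp (ff c))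

lemma bb_zero (c : ℚ) : bb c 0 = 1 := by
  rw [bb, coeff_zero_eq_constantCoeff_apply, constantCoeff_pexp (constantCoeff_ff c)]

lemma bb_rec (c : ℚ) (n : ℕ) :
    ((n : ℚ) + 1) * bb c (n+1) = c * ∑ k ∈ Finset.range (n+1), bb c k := by
  have h1 : ((n : ℚ) + 1) * bb c (n+1) = coeff n (d⁄dX ℚ (pexp (ff c))) := by
    rw [coeff_derivative, bb]
    ring
  rw [h1, pexp_deriv (constantCoeff_ff c), coeff_mul]
  have h2 : ∀ p ∈ antidiagonal n, coeff p.1 (d⁄dX ℚ (ff c)) * coeff p.2 (pexp (ff c))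
      = c * bb c p.2 := by
    intro p _
    rw [coeff_D_ff, bb]
  rw [Finset.sum_congr rfl h2, Nat.sum_antidiagonal_eq_sum_range_succ_mk, ← Finset.mul_sum,
    ← Finset.sum_range_reflect]
  congr 1
  refine Finset.sum_congr rfl fun k hk => ?_
  rw [Finset.mem_range] at hk
  congr 1
  omega

lemma D_ff_mul (c : ℚ) : d⁄dX ℚ (ff c) * (1 - X) = C c := by
  ext n
  rw [mul_sub, mul_one, map_sub, coeff_D_ff]
  cases n with
  | zero => simp [coeff_zero_mul_X]
  | succ n => simp [coeff_succ_mul_X, coeff_D_ff, coeff_C]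

lemma pexp_zero : pexp (0 : ℚ⟦X⟧) = 1 := by
  ext n
  rw [coeff_pexp]
  rcases Nat.eq_zero_or_pos n with rfl | hn
  · simp
  · rw [Finset.sum_eq_zero, coeff_one, if_neg hn.ne']
    intro j hj
    rcases Nat.eq_zero_or_pos j with rfl | hj0
    · simp [coeff_one, hn.ne']
    · rw [zero_pow hj0.ne', map_zero, mul_zero]

lemma ff_zero : ff 0 = 0 := by
  ext n
  simp [ff]

lemma part2 (c : ℚ) : ∀ d : ℕ, c = d →
    pexp (ff c) * (1 - (PowerSeries.X : PowerSeries ℚ)) ^ d = 1 := by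
  rintro (_ | e) hc
  · rw [Nat.cast_zero] at hc
    subst hc
    rw [ff_zero, pexp_zero, pow_zero, one_mul]
  · have hC : C c = ((e + 1 : ℕ) : ℚ⟦X⟧) := by rw [hc, map_natCast]
    have hdX : d⁄dX ℚ (1 - X : ℚ⟦X⟧) = -1 := by
      rw [map_sub, derivative_X]
      simp
    have key : d⁄dX ℚ (pexp (ff c) * (1 - X) ^ (e + 1)) = 0 := by
      rw [Derivation.leibniz, Derivation.leibniz_pow, hdX,
        pexp_deriv (constantCoeff_ff c)]
      simp only [smul_eq_mul, nsmul_eq_mul, Nat.add_sub_cancel]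
      have h1 : (1 - X : ℚ⟦X⟧) ^ (e + 1) * (d⁄dX ℚ (ff c) * pexp (ff c))
          = ((e + 1 : ℕ) : ℚ⟦X⟧) * ((1 - X) ^ e * pexp (ff c)) := by
        rw [pow_succ]
        calc (1 - X : ℚ⟦X⟧) ^ e * (1 - X) * (d⁄dX ℚ (ff c) * pexp (ff c))
            = (d⁄dX ℚ (ff c) * (1 - X)) * ((1 - X) ^ e * pexp (ff c)) := by ring
          _ = ((e + 1 : ℕ) : ℚ⟦X⟧) * ((1 - X) ^ e * pexp (ff c)) := by
              rw [D_ff_mul, hC]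
      rw [h1]
      ring
    refine derivative.ext (f := pexp (ff c) * (1 - X) ^ (e + 1)) (g := 1) ?_ ?_
    · rw [key]
      have : d⁄dX ℚ (1 : ℚ⟦X⟧) = 0 := Derivation.map_one_eq_zero _
      rw [this]
    · rw [map_mul, map_pow, map_sub, constantCoeff_pexp (constantCoeff_ff c)]
      simp

lemma aa_eq_bb (c : ℚ) : ∀ n, aa c n = bb c n := by
  intro n
  induction n using Nat.strong_induction_on with
  | _ n ih =>
    match n with
    | 0 => rw [aa_zero, bb_zero]
    | Nat.succ m =>
      have h1 := aa_rec c m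
      have h2 := bb_rec c m
      have hsum : ∑ k ∈ Finset.range (m+1), aa c k = ∑ k ∈ Finset.range (m+1), bb c k :=
        Finset.sum_congr rfl fun k hk => ih k (Finset.mem_range.1 hk |>.trans_le (le_refl (m+1)))
      have hne : ((m : ℚ) + 1) ≠ 0 := by positivity
      exact mul_left_cancel₀ hne (h1.trans (by rw [hsum, ← h2]))

end Euler15


open Euler15 in
theorem euler_numbers_symmetric_products (c : ℚ) :
    ((PowerSeries.mk fun n =>
        ∑' N : {N : ℕ →₀ ℕ // N 0 = 0 ∧ (N.sum fun l k => l * k) = n},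
          (∏ l ∈ N.1.support, ((N.1 l).factorial : ℚ)⁻¹ * (c / l) ^ (N.1 l))
        : PowerSeries ℚ) =
      pexp (PowerSeries.mk fun m => if m = 0 then 0 else c / m)) ∧
    ∀ d : ℕ, c = d →
      pexp (PowerSeries.mk fun m => if m = 0 then 0 else c / m) *
          (1 - (PowerSeries.X : PowerSeries ℚ)) ^ d = 1 := by
  constructor
  · ext n
    rw [PowerSeries.coeff_mk, tsum_eq_sum_SS c n]
    exact aa_eq_bb c n
  · exact part2 c
end
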